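/- arXiv:1001.5073 — 8 statements merged into one kernel-verified Lean document; each statement's English description precedes it below -/
import Mathlib

section
/- Let A be a real n×m matrix with n < m satisfying the URP, and let 1 ≤ n0 ≤ n. Then γ_A(n0) ≤ max over nonempty index sets I ⊆ {1,…,m} with |I| ≤ n0 of σ_max(A_{I^c})² / σ_min(A_I)², where σ_min(·) and σ_max(·) denote the smallest and largest singular values of a matrix. -/
open Finset
open scoped BigOperators

noncomputable section

/-- Squared Euclidean norm of a vector. -/
def nsq {ι : Type*} [Fintype ι] (s : ι → ℝ) : ℝ := ∑ i, (s i) ^ 2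

/-- The Unique Representation Property: every `n × n` submatrix of `A` is invertible. -/
def URP {n m : ℕ} (A : Matrix (Fin n) (Fin m) ℝ) : Prop :=
  ∀ g : Fin n → Fin m, Function.Injective g → IsUnit (A.submatrix id g)

/-- Number of nonzero components (the ℓ⁰ "norm"). -/
def l0 {ι : Type*} [Fintype ι] (s : ι → ℝ) : ℕ :=
  (Finset.univ.filter fun i => s i ≠ 0).card

/-- Number of components with absolute value greater than σ. -/
def l0s {ι : Type*} [Fintype ι] (s : ι → ℝ) (σ : ℝ) : ℕ :=
  (Finset.univ.filter fun i => σ < |s i|).card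

/-- The set of ratios ‖π_I(s)‖²/‖π_{Iᶜ}(s)‖² over index sets `I` with `|I| ≤ n0`
and nonzero null-space vectors `s`. -/
def gammaSet {n m : ℕ} (A : Matrix (Fin n) (Fin m) ℝ) (n0 : ℕ) : Set ℝ :=
  {r | ∃ (I : Finset (Fin m)) (s : Fin m → ℝ), I.card ≤ n0 ∧ A.mulVec s = 0 ∧ s ≠ 0 ∧
    r = (∑ i ∈ I, (s i) ^ 2) / (∑ i ∈ Iᶜ, (s i) ^ 2)}

/-- γ_A(n0), the supremum of the above set of ratios. -/
def gammaA {n m : ℕ} (A : Matrix (Fin n) (Fin m) ℝ) (n0 : ℕ) : ℝ :=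
  sSup (gammaSet A n0)

/-- Square of the largest singular value of a matrix (Rayleigh quotient form). -/
def sMaxSq {p q : Type*} [Fintype p] [Fintype q] (B : Matrix p q ℝ) : ℝ :=
  sSup {r | ∃ v : q → ℝ, nsq v = 1 ∧ r = nsq (B.mulVec v)}

/-- Square of the smallest singular value of a matrix with at least as many rows as
columns (Rayleigh quotient form). -/
def sMinSq {p q : Type*} [Fintype p] [Fintype q] (B : Matrix p q ℝ) : ℝ :=
  sInf {r | ∃ v : q → ℝ, nsq v = 1 ∧ r = nsq (B.mulVec v)}

/-- The quadratic spline f_γ. -/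
def fsp (γ u : ℝ) : ℝ :=
  if |u| ≤ 1 then 1 - u ^ 2 / (1 + γ)
  else if |u| ≤ 1 + γ then (|u| - γ - 1) ^ 2 / (γ ^ 2 + γ)
  else 0

/-- F_{γ,σ}(s) = Σ_i f_γ(s_i/σ). -/
def Fsp {m : ℕ} (γ σ : ℝ) (s : Fin m → ℝ) : ℝ := ∑ i, fsp γ (s i / σ)

/-- The piecewise second derivative g_γ of f_γ. -/
def gsp (γ u : ℝ) : ℝ :=
  if |u| ≤ 1 then -2 / (1 + γ)
  else if |u| ≤ 1 + γ then 2 / (γ ^ 2 + γ)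
  else 0

/-- The derivative f_γ′. -/
def fspDeriv (γ u : ℝ) : ℝ :=
  if |u| ≤ 1 then -2 * u / (1 + γ)
  else if |u| ≤ 1 + γ then 2 * (|u| - γ - 1) / (γ ^ 2 + γ) * Real.sign u
  else 0

/-- The gradient of F_{γ,σ}: its i-th component is (1/σ)·f_γ′(s_i/σ). -/
def gradF {m : ℕ} (γ σ : ℝ) (s : Fin m → ℝ) : Fin m → ℝ :=
  fun i => fspDeriv γ (s i / σ) / σ

/-- The lower asymmetric restricted isometry constant δ_k^{min} of `A`. -/
def aricMin {n m : ℕ} (A : Matrix (Fin n) (Fin m) ℝ) (k : ℕ) : ℝ :=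
  sInf {δ : ℝ | 0 ≤ δ ∧ ∀ s : Fin m → ℝ, l0 s ≤ k → (1 - δ) * nsq s ≤ nsq (A.mulVec s)}

end

section AuxLemmas

namespace Aux

lemma nsq_nonneg {ι : Type*} [Fintype ι] (s : ι → ℝ) : 0 ≤ nsq s :=
  Finset.sum_nonneg fun _ _ => sq_nonneg _

lemma nsq_eq_zero {ι : Type*} [Fintype ι] {s : ι → ℝ} (h : nsq s = 0) : s = 0 := by
  funext i
  have h2 := (Finset.sum_eq_zero_iff_of_nonneg (fun i _ => sq_nonneg (s i))).1 h i (Finset.mem_univ i)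
  exact pow_eq_zero_iff (two_ne_zero) |>.1 h2

lemma nsq_pos {ι : Type*} [Fintype ι] {s : ι → ℝ} (hs : s ≠ 0) : 0 < nsq s :=
  lt_of_le_of_ne (nsq_nonneg s) (fun h => hs (nsq_eq_zero h.symm))

lemma nsq_smul {ι : Type*} [Fintype ι] (c : ℝ) (s : ι → ℝ) : nsq (c • s) = c ^ 2 * nsq s := by
  simp [nsq, mul_pow, Finset.mul_sum]

lemma nsq_neg {ι : Type*} [Fintype ι] (s : ι → ℝ) : nsq (-s) = nsq s := by
  simp [nsq]

/-- Rayleigh set. -/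
def RS {p q : Type*} [Fintype p] [Fintype q] (B : Matrix p q ℝ) : Set ℝ :=
  {r | ∃ v : q → ℝ, nsq v = 1 ∧ r = nsq (B.mulVec v)}

lemma RS_bddAbove {p q : Type*} [Fintype p] [Fintype q] (B : Matrix p q ℝ) :
    BddAbove (RS B) := by
  refine ⟨∑ i, ∑ j, B i j ^ 2, ?_⟩
  rintro r ⟨v, hv, rfl⟩
  have : ∀ i : p, (B.mulVec v i) ^ 2 ≤ ∑ j, B i j ^ 2 := by
    intro i
    have hcs := Finset.sum_mul_sq_le_sq_mul_sq Finset.univ (fun j => B i j) v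
    have hv' : ∑ j, v j ^ 2 = 1 := hv
    rw [hv', mul_one] at hcs
    simpa [Matrix.mulVec, dotProduct] using hcs
  calc nsq (B.mulVec v) = ∑ i, (B.mulVec v i) ^ 2 := rfl
    _ ≤ ∑ i, ∑ j, B i j ^ 2 := Finset.sum_le_sum fun i _ => this i

lemma RS_bddBelow {p q : Type*} [Fintype p] [Fintype q] (B : Matrix p q ℝ) :
    BddBelow (RS B) := by
  refine ⟨0, ?_⟩
  rintro r ⟨v, hv, rfl⟩
  exact nsq_nonneg _

lemma RS_nonempty {p q : Type*} [Fintype p] [Fintype q] [Nonempty q] (B : Matrix p q ℝ) :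
    (RS B).Nonempty := by
  obtain ⟨j0⟩ := ‹Nonempty q›
  classical
  refine ⟨nsq (B.mulVec (Pi.single j0 1)), Pi.single j0 1, ?_, rfl⟩
  simp [nsq, Pi.single_apply, sq]

lemma nsq_mulVec_le {p q : Type*} [Fintype p] [Fintype q] (B : Matrix p q ℝ) (v : q → ℝ) :
    nsq (B.mulVec v) ≤ sMaxSq B * nsq v := by
  rcases eq_or_ne v 0 with rfl | hv
  · simp [Matrix.mulVec_zero, nsq]
  · have hpos : 0 < nsq v := nsq_pos hv
    set t : ℝ := Real.sqrt (nsq v) with ht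
    have ht0 : 0 < t := Real.sqrt_pos.2 hpos
    have ht2 : t ^ 2 = nsq v := Real.sq_sqrt (nsq_nonneg v)
    have hunit : nsq (t⁻¹ • v) = 1 := by
      rw [nsq_smul, ← ht2]; field_simp
    have hmem : nsq (B.mulVec (t⁻¹ • v)) ∈ RS B := ⟨_, hunit, rfl⟩
    have hle : nsq (B.mulVec (t⁻¹ • v)) ≤ sMaxSq B := le_csSup (RS_bddAbove B) hmem
    have heq : nsq (B.mulVec (t⁻¹ • v)) = t⁻¹ ^ 2 * nsq (B.mulVec v) := by
      rw [Matrix.mulVec_smul, nsq_smul]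
    rw [heq] at hle
    have := mul_le_mul_of_nonneg_left hle (le_of_lt (pow_pos ht0 2))
    rw [← mul_assoc, ← mul_pow, mul_inv_cancel₀ ht0.ne', one_pow, one_mul] at this
    calc nsq (B.mulVec v) ≤ t ^ 2 * sMaxSq B := this
      _ = sMaxSq B * nsq v := by rw [ht2, mul_comm]

lemma le_nsq_mulVec {p q : Type*} [Fintype p] [Fintype q] (B : Matrix p q ℝ) (v : q → ℝ) :
    sMinSq B * nsq v ≤ nsq (B.mulVec v) := by
  rcases eq_or_ne v 0 with rfl | hv
  · simp [Matrix.mulVec_zero, nsq]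
  · have hpos : 0 < nsq v := nsq_pos hv
    set t : ℝ := Real.sqrt (nsq v) with ht
    have ht0 : 0 < t := Real.sqrt_pos.2 hpos
    have ht2 : t ^ 2 = nsq v := Real.sq_sqrt (nsq_nonneg v)
    have hunit : nsq (t⁻¹ • v) = 1 := by
      rw [nsq_smul, ← ht2]; field_simp
    have hmem : nsq (B.mulVec (t⁻¹ • v)) ∈ RS B := ⟨_, hunit, rfl⟩
    have hle : sMinSq B ≤ nsq (B.mulVec (t⁻¹ • v)) := csInf_le (RS_bddBelow B) hmem
    have heq : nsq (B.mulVec (t⁻¹ • v)) = t⁻¹ ^ 2 * nsq (B.mulVec v) := by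
      rw [Matrix.mulVec_smul, nsq_smul]
    rw [heq] at hle
    have := mul_le_mul_of_nonneg_left hle (le_of_lt (pow_pos ht0 2))
    rw [← mul_assoc (t^2), ← mul_pow, mul_inv_cancel₀ ht0.ne', one_pow, one_mul] at this
    calc sMinSq B * nsq v = t ^ 2 * sMinSq B := by rw [ht2, mul_comm]
      _ ≤ nsq (B.mulVec v) := this

lemma sMinSq_nonneg {p q : Type*} [Fintype p] [Fintype q] [Nonempty q] (B : Matrix p q ℝ) :
    0 ≤ sMinSq B :=
  le_csInf (RS_nonempty B) (by rintro r ⟨v, hv, rfl⟩; exact nsq_nonneg _)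

lemma sMaxSq_nonneg {p q : Type*} [Fintype p] [Fintype q] [Nonempty q] (B : Matrix p q ℝ) :
    0 ≤ sMaxSq B := by
  obtain ⟨r, hr⟩ := RS_nonempty B
  obtain ⟨v, hv, rfl⟩ := hr
  exact le_trans (nsq_nonneg _) (le_csSup (RS_bddAbove B) ⟨v, hv, rfl⟩)

lemma sMinSq_pos {p q : Type*} [Fintype p] [Fintype q] [Nonempty q] (B : Matrix p q ℝ)
    (hinj : ∀ v : q → ℝ, B.mulVec v = 0 → v = 0) : 0 < sMinSq B := by
  classical
  set S : Set (q → ℝ) := {v | nsq v = 1} with hS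
  have hSne : S.Nonempty := by
    obtain ⟨j0⟩ := ‹Nonempty q›
    exact ⟨Pi.single j0 1, by simp [S, nsq, Pi.single_apply, sq]⟩
  have hcont_nsq : Continuous fun v : q → ℝ => nsq v := by
    apply continuous_finset_sum
    intro i _
    exact (continuous_apply i).pow 2
  have hSclosed : IsClosed S := isClosed_eq hcont_nsq continuous_const
  have hSbdd : Bornology.IsBounded S := by
    apply (Metric.isBounded_iff_subset_closedBall 0).2
    refine ⟨1, fun v hv => ?_⟩
    simp only [Metric.mem_closedBall, dist_zero_right]
    apply pi_norm_le_iff_of_nonneg zero_le_one |>.2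
    intro i
    rw [Real.norm_eq_abs, abs_le]
    have h1 : v i ^ 2 ≤ 1 := by
      have : v i ^ 2 ≤ nsq v := Finset.single_le_sum (fun j _ => sq_nonneg (v j)) (Finset.mem_univ i)
      simpa [hv.out] using this
    constructor <;> nlinarith
  have hScompact : IsCompact S := Metric.isCompact_of_isClosed_isBounded hSclosed hSbdd
  have hfcont : Continuous fun v : q → ℝ => nsq (B.mulVec v) := by
    apply continuous_finset_sum
    intro i _
    have : Continuous fun v : q → ℝ => B.mulVec v i := by
      simp only [Matrix.mulVec, dotProduct]
      exact continuous_finset_sum _ fun j _ => (continuous_const.mul (continuous_apply j))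
    exact this.pow 2
  obtain ⟨v0, hv0S, hmin⟩ := hScompact.exists_isMinOn hSne hfcont.continuousOn
  have hv0 : v0 ≠ 0 := by
    intro h
    rw [h] at hv0S
    simp [S, nsq] at hv0S
  have hfv0 : 0 < nsq (B.mulVec v0) := by
    apply nsq_pos
    intro h
    exact hv0 (hinj v0 h)
  refine lt_of_lt_of_le hfv0 ?_
  apply le_csInf (RS_nonempty B)
  rintro r ⟨v, hv, rfl⟩
  exact hmin hv

end Aux

namespace Aux

/-- Injectivity of columns selected by a small index set, from URP. -/
lemma urp_inj {n m : ℕ} {A : Matrix (Fin n) (Fin m) ℝ} (hURP : URP A) (hnm : n ≤ m)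
    (I : Finset (Fin m)) (hI : I.card ≤ n)
    (v : {x // x ∈ I} → ℝ)
    (hv : (A.submatrix id (fun j : {x // x ∈ I} => (j : Fin m))).mulVec v = 0) : v = 0 := by
  classical
  obtain ⟨J, hIJ, -, hJcard⟩ := Finset.exists_subsuperset_card_eq (I.subset_univ) hI
    (by simpa using hnm)
  set e : Fin n ≃o {x // x ∈ J} := J.orderIsoOfFin hJcard with he
  set g : Fin n → Fin m := fun k => (e k : Fin m) with hg
  have hginj : Function.Injective g := by
    intro a b hab
    exact e.injective (Subtype.ext hab)
  have hU : IsUnit (A.submatrix id g) := hURP g hginj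
  set s : Fin m → ℝ := fun j => if h : j ∈ I then v ⟨j, h⟩ else 0 with hs
  have hAs : A.mulVec s = 0 := by
    funext i
    have h1 : A.mulVec s i = ∑ j ∈ I, A i j * s j := by
      rw [Matrix.mulVec, dotProduct]
      symm
      apply Finset.sum_subset (I.subset_univ)
      intro j _ hj
      simp [hs, hj]
    have h2 : ∑ j ∈ I, A i j * s j = (A.submatrix id (fun j : {x // x ∈ I} => (j : Fin m))).mulVec v i := by
      rw [Matrix.mulVec, dotProduct, ← Finset.sum_coe_sort I]
      apply Finset.sum_congr rfl
      intro j _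
      simp [hs, j.2, Matrix.submatrix]
    rw [h1, h2, hv]
  set w : Fin n → ℝ := fun k => s (g k) with hw
  have hMw : (A.submatrix id g).mulVec w = 0 := by
    funext i
    have h3 : (A.submatrix id g).mulVec w i = ∑ k : Fin n, A i (g k) * s (g k) := by
      simp [Matrix.mulVec, dotProduct, Matrix.submatrix, hw]
    have h4 : ∑ k : Fin n, A i (g k) * s (g k) = ∑ j ∈ J, A i j * s j := by
      rw [← Finset.sum_coe_sort J]
      exact Fintype.sum_equiv e.toEquiv _ _ (fun k => rfl)
    have h5 : ∑ j ∈ J, A i j * s j = ∑ j, A i j * s j := by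
      apply Finset.sum_subset (J.subset_univ)
      intro j _ hj
      have : j ∉ I := fun hjI => hj (hIJ hjI)
      simp [hs, this]
    rw [h3, h4, h5]
    have := congrFun hAs i
    simpa [Matrix.mulVec, dotProduct] using this
  -- invert
  have hdet : IsUnit (A.submatrix id g).det := (Matrix.isUnit_iff_isUnit_det _).1 hU
  have hw0 : w = 0 := by
    have h6 : (A.submatrix id g)⁻¹ * (A.submatrix id g) = 1 := Matrix.nonsing_inv_mul _ hdet
    calc w = Matrix.mulVec 1 w := by rw [Matrix.one_mulVec]
      _ = ((A.submatrix id g)⁻¹ * (A.submatrix id g)).mulVec w := by rw [h6]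
      _ = (A.submatrix id g)⁻¹.mulVec ((A.submatrix id g).mulVec w) := by
            rw [← Matrix.mulVec_mulVec]
      _ = 0 := by rw [hMw, Matrix.mulVec_zero]
  funext x
  have hxJ : (x : Fin m) ∈ J := hIJ x.2
  have hk : g (e.symm ⟨x, hxJ⟩) = (x : Fin m) := by
    simp [hg]
  have := congrFun hw0 (e.symm ⟨x, hxJ⟩)
  rw [hw] at this
  simp only [hk] at this
  simpa [hs, x.2] using this

end Aux

end AuxLemmas

/-- γ_A(n0) is bounded by the max over nonempty index sets `I` with
`|I| ≤ n0` of σ_max(A_{Iᶜ})²/σ_min(A_I)². -/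
theorem stmt_0 {n m : ℕ} (hnm : n < m) (A : Matrix (Fin n) (Fin m) ℝ)
    (hURP : URP A) (n0 : ℕ) (hn1 : 1 ≤ n0) (hn0 : n0 ≤ n) :
    gammaA A n0 ≤
      sSup {r : ℝ | ∃ I : Finset (Fin m), I.Nonempty ∧ I.card ≤ n0 ∧
        r = sMaxSq (A.submatrix id (fun j : {x // x ∈ Iᶜ} => (j : Fin m))) /
            sMinSq (A.submatrix id (fun j : {x // x ∈ I} => (j : Fin m)))} := by
  classical
  set T : Set ℝ := {r : ℝ | ∃ I : Finset (Fin m), I.Nonempty ∧ I.card ≤ n0 ∧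
        r = sMaxSq (A.submatrix id (fun j : {x // x ∈ Iᶜ} => (j : Fin m))) /
            sMinSq (A.submatrix id (fun j : {x // x ∈ I} => (j : Fin m)))} with hT
  have hTbdd : BddAbove T := by
    apply Set.Finite.bddAbove
    apply Set.Finite.subset (Set.finite_range (fun I : Finset (Fin m) =>
      sMaxSq (A.submatrix id (fun j : {x // x ∈ Iᶜ} => (j : Fin m))) /
      sMinSq (A.submatrix id (fun j : {x // x ∈ I} => (j : Fin m)))))
    rintro r ⟨I, -, -, rfl⟩
    exact ⟨I, rfl⟩
  have hcompl : ∀ I : Finset (Fin m), I.card ≤ n0 → Nonempty {x // x ∈ Iᶜ} := by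
    intro I hI
    rw [Finset.nonempty_coe_sort, ← Finset.card_pos, Finset.card_compl]
    simp only [Fintype.card_fin]
    omega
  have hsupT : 0 ≤ sSup T := by
    have hm0 : 0 < m := lt_of_le_of_lt (Nat.zero_le n) hnm
    set I0 : Finset (Fin m) := {(⟨0, hm0⟩ : Fin m)} with hI0
    have hI0ne : I0.Nonempty := ⟨_, Finset.mem_singleton_self _⟩
    have hI0card : I0.card ≤ n0 := by simp [hI0, hn1]
    haveI : Nonempty {x // x ∈ I0} := Finset.nonempty_coe_sort.2 hI0ne
    haveI : Nonempty {x // x ∈ I0ᶜ} := hcompl I0 hI0card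
    have hpos : 0 < sMinSq (A.submatrix id (fun j : {x // x ∈ I0} => (j : Fin m))) :=
      Aux.sMinSq_pos _ (Aux.urp_inj hURP hnm.le I0 (hI0card.trans hn0))
    have hel : (0:ℝ) ≤ sMaxSq (A.submatrix id (fun j : {x // x ∈ I0ᶜ} => (j : Fin m))) /
        sMinSq (A.submatrix id (fun j : {x // x ∈ I0} => (j : Fin m))) :=
      div_nonneg (Aux.sMaxSq_nonneg _) hpos.le
    exact le_trans hel (le_csSup hTbdd ⟨I0, hI0ne, hI0card, rfl⟩)
  rw [gammaA]
  apply Real.sSup_le _ hsupT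
  rintro r ⟨I, s, hIcard, hAs, hs0, rfl⟩
  rcases I.eq_empty_or_nonempty with rfl | hIne
  · rw [Finset.sum_empty, zero_div]
    exact hsupT
  · haveI : Nonempty {x // x ∈ I} := Finset.nonempty_coe_sort.2 hIne
    haveI : Nonempty {x // x ∈ Iᶜ} := hcompl I hIcard
    set BI := A.submatrix id (fun j : {x // x ∈ I} => (j : Fin m)) with hBI
    set BC := A.submatrix id (fun j : {x // x ∈ Iᶜ} => (j : Fin m)) with hBC
    set vI : {x // x ∈ I} → ℝ := fun j => s j with hvI
    set vC : {x // x ∈ Iᶜ} → ℝ := fun j => s j with hvC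
    have hnum : nsq vI = ∑ i ∈ I, s i ^ 2 := Finset.sum_coe_sort I (fun j => s j ^ 2)
    have hdnm : nsq vC = ∑ i ∈ Iᶜ, s i ^ 2 := Finset.sum_coe_sort Iᶜ (fun j => s j ^ 2)
    have hsplit : BI.mulVec vI = - BC.mulVec vC := by
      funext i
      have h1 : BI.mulVec vI i = ∑ j ∈ I, A i j * s j := by
        rw [Matrix.mulVec, dotProduct, ← Finset.sum_coe_sort I (fun j => A i j * s j)]
        rfl
      have h2 : BC.mulVec vC i = ∑ j ∈ Iᶜ, A i j * s j := by
        rw [Matrix.mulVec, dotProduct, ← Finset.sum_coe_sort Iᶜ (fun j => A i j * s j)]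
        rfl
      have h3 : (∑ j ∈ I, A i j * s j) + ∑ j ∈ Iᶜ, A i j * s j = ∑ j, A i j * s j :=
        Finset.sum_add_sum_compl I _
      have h4 : (∑ j, A i j * s j) = 0 := by
        have := congrFun hAs i
        simpa [Matrix.mulVec, dotProduct] using this
      simp only [Pi.neg_apply, h1, h2]
      linarith
    have hinj := Aux.urp_inj hURP hnm.le I (hIcard.trans hn0)
    have hMin : 0 < sMinSq BI := Aux.sMinSq_pos _ hinj
    have hvC0 : nsq vC ≠ 0 := by
      intro h
      have hvCz : vC = 0 := Aux.nsq_eq_zero h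
      have hBI0 : BI.mulVec vI = 0 := by
        rw [hsplit, hvCz, Matrix.mulVec_zero, neg_zero]
      have hvIz : vI = 0 := hinj vI hBI0
      apply hs0
      funext j
      by_cases hj : j ∈ I
      · exact congrFun hvIz ⟨j, hj⟩
      · exact congrFun hvCz ⟨j, Finset.mem_compl.2 hj⟩
    have hden : 0 < nsq vC := lt_of_le_of_ne (Aux.nsq_nonneg _) (Ne.symm hvC0)
    have hc1 : sMinSq BI * nsq vI ≤ nsq (BI.mulVec vI) := Aux.le_nsq_mulVec _ _
    have hc2 : nsq (BI.mulVec vI) = nsq (BC.mulVec vC) := by rw [hsplit, Aux.nsq_neg]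
    have hc3 : nsq (BC.mulVec vC) ≤ sMaxSq BC * nsq vC := Aux.nsq_mulVec_le _ _
    have hr : (∑ i ∈ I, s i ^ 2) / (∑ i ∈ Iᶜ, s i ^ 2) ≤ sMaxSq BC / sMinSq BI := by
      rw [← hnum, ← hdnm, div_le_div_iff₀ hden hMin]
      calc nsq vI * sMinSq BI = sMinSq BI * nsq vI := mul_comm _ _
        _ ≤ sMaxSq BC * nsq vC := by linarith
        _ = sMaxSq BC * nsq vC := rfl
    exact le_trans hr (le_csSup hTbdd ⟨I, hIne, hIcard, rfl⟩)
end

section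
/- Let A be a real n×m matrix with n < m satisfying the URP, and let 1 ≤ n0 ≤ n. Then γ_A(n0) + 1 ≤ ‖A‖₂² / (min over nonempty index sets I ⊆ {1,…,m} with |I| ≤ n0 of σ_min(A_I)²), where ‖A‖₂ denotes the spectral norm (largest singular value) of A and σ_min(A_I) the smallest singular value of the column submatrix A_I. -/
open Finset
open scoped BigOperators

noncomputable section Aux


lemma nsq_nonneg {ι : Type*} [Fintype ι] (s : ι → ℝ) : 0 ≤ nsq s :=
  Finset.sum_nonneg fun _ _ => sq_nonneg _

lemma nsq_eq_zero_iff {ι : Type*} [Fintype ι] {s : ι → ℝ} : nsq s = 0 ↔ s = 0 := by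
  constructor
  · intro h
    funext i
    have := (Finset.sum_eq_zero_iff_of_nonneg (fun i _ => sq_nonneg (s i))).1 h i (mem_univ i)
    simpa using pow_eq_zero_iff (n := 2) (by norm_num) |>.1 this
  · rintro rfl; simp [nsq]

lemma nsq_smul {ι : Type*} [Fintype ι] (c : ℝ) (s : ι → ℝ) : nsq (c • s) = c ^ 2 * nsq s := by
  simp [nsq, Finset.mul_sum, mul_pow]

lemma nsq_mulVec_le_frob {p q : Type*} [Fintype p] [Fintype q] (B : Matrix p q ℝ) (v : q → ℝ) :
    nsq (B.mulVec v) ≤ (∑ i, ∑ j, (B i j) ^ 2) * nsq v := by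
  rw [Finset.sum_mul]
  refine Finset.sum_le_sum fun i _ => ?_
  simpa [Matrix.mulVec, dotProduct, nsq] using
    Finset.sum_mul_sq_le_sq_mul_sq univ (fun j => B i j) v

lemma bddAbove_sMaxSq {p q : Type*} [Fintype p] [Fintype q] (B : Matrix p q ℝ) :
    BddAbove {r | ∃ v : q → ℝ, nsq v = 1 ∧ r = nsq (B.mulVec v)} := by
  refine ⟨∑ i, ∑ j, (B i j) ^ 2, ?_⟩
  rintro r ⟨v, hv, rfl⟩
  simpa [hv] using nsq_mulVec_le_frob B v

lemma nsq_mulVec_le_sMaxSq {p q : Type*} [Fintype p] [Fintype q] (B : Matrix p q ℝ)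
    (v : q → ℝ) : nsq (B.mulVec v) ≤ sMaxSq B * nsq v := by
  rcases eq_or_ne (nsq v) 0 with hv | hv
  · have : v = 0 := nsq_eq_zero_iff.1 hv
    simp [this, hv, nsq_eq_zero_iff.2]
  · have hpos : 0 < nsq v := lt_of_le_of_ne (nsq_nonneg v) (Ne.symm hv)
    set c : ℝ := (Real.sqrt (nsq v))⁻¹ with hc
    have hs : Real.sqrt (nsq v) ^ 2 = nsq v := Real.sq_sqrt (nsq_nonneg v)
    have hsp : 0 < Real.sqrt (nsq v) := Real.sqrt_pos.2 hpos
    have h1 : nsq (c • v) = 1 := by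
      rw [nsq_smul]
      rw [hc, inv_pow, hs, inv_mul_cancel₀ hv]
    have hmem : nsq (B.mulVec (c • v)) ∈ {r | ∃ v : q → ℝ, nsq v = 1 ∧ r = nsq (B.mulVec v)} :=
      ⟨c • v, h1, rfl⟩
    have hle : nsq (B.mulVec (c • v)) ≤ sMaxSq B := le_csSup (bddAbove_sMaxSq B) hmem
    rw [Matrix.mulVec_smul, nsq_smul] at hle
    have hc2 : c ^ 2 = (nsq v)⁻¹ := by
      rw [hc, inv_pow, hs]
    rw [hc2] at hle
    calc nsq (B.mulVec v) = (nsq v)⁻¹ * nsq (B.mulVec v) * nsq v := by field_simp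
    _ ≤ sMaxSq B * nsq v := mul_le_mul_of_nonneg_right hle (nsq_nonneg v)

lemma sMinSq_mul_le {p q : Type*} [Fintype p] [Fintype q] (B : Matrix p q ℝ)
    (v : q → ℝ) : sMinSq B * nsq v ≤ nsq (B.mulVec v) := by
  rcases eq_or_ne (nsq v) 0 with hv | hv
  · have : v = 0 := nsq_eq_zero_iff.1 hv
    simp [this, hv, nsq_eq_zero_iff.2]
  · have hpos : 0 < nsq v := lt_of_le_of_ne (nsq_nonneg v) (Ne.symm hv)
    set c : ℝ := (Real.sqrt (nsq v))⁻¹ with hc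
    have hs : Real.sqrt (nsq v) ^ 2 = nsq v := Real.sq_sqrt (nsq_nonneg v)
    have hsp : 0 < Real.sqrt (nsq v) := Real.sqrt_pos.2 hpos
    have h1 : nsq (c • v) = 1 := by
      rw [nsq_smul]; rw [hc, inv_pow, hs, inv_mul_cancel₀ hv]
    have hbdd : BddBelow {r | ∃ v : q → ℝ, nsq v = 1 ∧ r = nsq (B.mulVec v)} := by
      refine ⟨0, ?_⟩; rintro r ⟨v, hv, rfl⟩; exact nsq_nonneg _
    have hle : sMinSq B ≤ nsq (B.mulVec (c • v)) := csInf_le hbdd ⟨c • v, h1, rfl⟩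
    rw [Matrix.mulVec_smul, nsq_smul] at hle
    have hc2 : c ^ 2 = (nsq v)⁻¹ := by rw [hc, inv_pow, hs]
    rw [hc2] at hle
    calc sMinSq B * nsq v ≤ (nsq v)⁻¹ * nsq (B.mulVec v) * nsq v :=
      mul_le_mul_of_nonneg_right hle (nsq_nonneg v)
    _ = nsq (B.mulVec v) := by field_simp

lemma sMinSq_nonneg {p q : Type*} [Fintype p] [Fintype q] [Nonempty q] (B : Matrix p q ℝ) :
    0 ≤ sMinSq B := by
  classical
  refine le_csInf ⟨nsq (B.mulVec (Pi.single (Classical.arbitrary q) 1)),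
    Pi.single (Classical.arbitrary q) 1, ?_, rfl⟩ ?_
  · simp [nsq, Pi.single_apply, Finset.sum_ite_eq']
  · rintro r ⟨v, hv, rfl⟩; exact nsq_nonneg _

lemma continuous_nsq {ι : Type*} [Fintype ι] : Continuous (fun v : ι → ℝ => nsq v) := by
  unfold nsq
  exact continuous_finset_sum _ fun i _ => (continuous_apply i).pow 2

lemma continuous_mulVec {p q : Type*} [Fintype p] [Fintype q] (B : Matrix p q ℝ) :
    Continuous (fun v : q → ℝ => B.mulVec v) := by
  refine continuous_pi fun i => ?_
  unfold Matrix.mulVec dotProduct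
  exact continuous_finset_sum _ fun j _ => (continuous_const.mul (continuous_apply j))

lemma sMinSq_pos {p q : Type*} [Fintype p] [Fintype q] [Nonempty q] (B : Matrix p q ℝ)
    (hB : ∀ v : q → ℝ, B.mulVec v = 0 → v = 0) : 0 < sMinSq B := by
  classical
  set Sp : Set (q → ℝ) := {v | nsq v = 1} with hSp
  have hclosed : IsClosed Sp := isClosed_eq continuous_nsq continuous_const
  have hsub : Sp ⊆ Metric.closedBall 0 1 := by
    intro v hv
    simp only [Metric.mem_closedBall, dist_zero_right]
    rw [pi_norm_le_iff_of_nonneg zero_le_one]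
    intro i
    rw [Real.norm_eq_abs, abs_le]
    have h1 : v i ^ 2 ≤ 1 := by
      have : v i ^ 2 ≤ nsq v := Finset.single_le_sum (fun j _ => sq_nonneg (v j)) (mem_univ i)
      rwa [hv] at this
    constructor <;> nlinarith
  have hcpt : IsCompact Sp :=
    (isCompact_closedBall (0 : q → ℝ) 1).of_isClosed_subset hclosed hsub
  have hne : Sp.Nonempty := by
    refine ⟨Pi.single (Classical.arbitrary q) 1, ?_⟩
    simp [hSp, nsq, Pi.single_apply, Finset.sum_ite_eq']
  obtain ⟨v₀, hv₀, hmin⟩ := hcpt.exists_isMinOn hne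
    ((continuous_nsq.comp (continuous_mulVec B)).continuousOn)
  have hv₀ne : v₀ ≠ 0 := by
    intro h
    rw [hSp] at hv₀
    simp only [Set.mem_setOf_eq] at hv₀
    rw [h, nsq_eq_zero_iff.2 rfl] at hv₀
    norm_num at hv₀
  have hpos : 0 < nsq (B.mulVec v₀) := by
    rcases lt_or_eq_of_le (nsq_nonneg (B.mulVec v₀)) with h | h
    · exact h
    · exact absurd (hB v₀ (nsq_eq_zero_iff.1 h.symm)) hv₀ne
  refine lt_of_lt_of_le hpos (le_csInf ⟨nsq (B.mulVec v₀), v₀, hv₀, rfl⟩ ?_)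
  rintro r ⟨v, hv, rfl⟩
  exact hmin hv

lemma mulVec_submatrix_eq {n m : ℕ} (A : Matrix (Fin n) (Fin m) ℝ) (I : Finset (Fin m))
    (v : {x // x ∈ I} → ℝ) :
    (A.submatrix id (fun j : {x // x ∈ I} => (j : Fin m))).mulVec v
      = A.mulVec (fun j => if h : j ∈ I then v ⟨j, h⟩ else 0) := by
  funext i
  show ∑ j : {x // x ∈ I}, A i (↑j) * v j
      = ∑ j : Fin m, A i j * (if h : j ∈ I then v ⟨j, h⟩ else 0)
  rw [Finset.univ_eq_attach]
  calc ∑ j ∈ I.attach, A i (↑j) * v j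
      = ∑ j ∈ I.attach, A i (↑j) * (if h : (↑j : Fin m) ∈ I then v ⟨↑j, h⟩ else 0) := by
        refine Finset.sum_congr rfl fun j _ => ?_
        rw [dif_pos j.2]
    _ = ∑ j ∈ I, A i j * (if h : j ∈ I then v ⟨j, h⟩ else 0) :=
        Finset.sum_attach I (fun j => A i j * (if h : j ∈ I then v ⟨j, h⟩ else 0))
    _ = ∑ j : Fin m, A i j * (if h : j ∈ I then v ⟨j, h⟩ else 0) :=
        Finset.sum_subset (Finset.subset_univ I) (by
          intro j _ hj
          rw [dif_neg hj, mul_zero])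

lemma nsq_ext_eq {m : ℕ} (I : Finset (Fin m)) (v : {x // x ∈ I} → ℝ) :
    nsq (fun j : Fin m => if h : j ∈ I then v ⟨j, h⟩ else 0) = nsq v := by
  unfold nsq
  rw [Finset.univ_eq_attach]
  calc ∑ j : Fin m, (if h : j ∈ I then v ⟨j, h⟩ else 0) ^ 2
      = ∑ j ∈ I, (if h : j ∈ I then v ⟨j, h⟩ else 0) ^ 2 :=
        (Finset.sum_subset (Finset.subset_univ I) (by
          intro j _ hj
          rw [dif_neg hj]; norm_num)).symm
    _ = ∑ j ∈ I.attach, (if h : (↑j : Fin m) ∈ I then v ⟨↑j, h⟩ else 0) ^ 2 :=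
        (Finset.sum_attach I _).symm
    _ = ∑ j ∈ I.attach, v j ^ 2 := by
        refine Finset.sum_congr rfl fun j _ => ?_
        rw [dif_pos j.2]

lemma nsq_restr {m : ℕ} (I : Finset (Fin m)) (s : Fin m → ℝ) :
    nsq (fun j : {x // x ∈ I} => s ↑j) = ∑ j ∈ I, s j ^ 2 := by
  unfold nsq
  rw [Finset.univ_eq_attach]
  exact Finset.sum_attach I (fun j => s j ^ 2)

lemma urp_inj {n m : ℕ} (hnm : n < m) {A : Matrix (Fin n) (Fin m) ℝ} (hURP : URP A)
    (I : Finset (Fin m)) (hI : I.card ≤ n) (v : {x // x ∈ I} → ℝ)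
    (hv : (A.submatrix id (fun j : {x // x ∈ I} => (j : Fin m))).mulVec v = 0) : v = 0 := by
  classical
  obtain ⟨J, hIJ, hJcard⟩ := Finset.exists_superset_card_eq hI (by
    simpa using le_of_lt hnm)
  set e := J.orderIsoOfFin hJcard with he
  set g : Fin n → Fin m := fun k => (e k : Fin m) with hg
  have hginj : Function.Injective g := fun a b hab => by
    apply e.injective; exact Subtype.ext hab
  have hunit := hURP g hginj
  set y : Fin n → ℝ := fun k => if h : g k ∈ I then v ⟨g k, h⟩ else 0 with hy
  have hAy : (A.submatrix id g).mulVec y = 0 := by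
    funext i
    show ∑ k : Fin n, A i (g k) * y k = 0
    have := congrFun hv i
    rw [mulVec_submatrix_eq] at this
    rw [show (0 : Fin n → ℝ) i = 0 from rfl] at this
    rw [← this]
    show _ = ∑ j : Fin m, A i j * (if h : j ∈ I then v ⟨j, h⟩ else 0)
    calc ∑ k : Fin n, A i (g k) * y k
        = ∑ j ∈ J, A i j * (if h : j ∈ I then v ⟨j, h⟩ else 0) := by
          rw [← Finset.sum_attach J (fun j => A i j * (if h : j ∈ I then v ⟨j, h⟩ else 0))]
          refine (Finset.sum_bij (fun k _ => e k) (fun k _ => Finset.mem_attach _ _)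
            (fun a _ b _ hab => e.injective hab)
            (fun j _ => ⟨e.symm j, Finset.mem_univ _, e.apply_symm_apply j⟩)
            ?_)
          intro k _
          simp only [hy, hg]
    _ = ∑ j : Fin m, A i j * (if h : j ∈ I then v ⟨j, h⟩ else 0) :=
        Finset.sum_subset (Finset.subset_univ J) (by
          intro j _ hj
          rw [dif_neg (fun hjI => hj (hIJ hjI)), mul_zero])
  have hy0 : y = 0 := by
    have := Matrix.mulVec_injective_iff_isUnit.2 hunit
    have h0 : (A.submatrix id g).mulVec y = (A.submatrix id g).mulVec 0 := by
      rw [hAy, Matrix.mulVec_zero]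
    exact this h0
  funext j
  have hjJ : (j : Fin m) ∈ J := hIJ j.2
  obtain ⟨k, hk⟩ : ∃ k, g k = (j : Fin m) := ⟨e.symm ⟨j, hjJ⟩, by
    simp [hg, e.apply_symm_apply]⟩
  have := congrFun hy0 k
  rw [hy] at this
  simp only [hk] at this
  rw [dif_pos j.2] at this
  simpa [Subtype.coe_eta] using this

end Aux

/-- γ_A(n0) + 1 ≤ ‖A‖₂² / min over nonempty `I` with `|I| ≤ n0` of σ_min(A_I)². -/
theorem stmt_1 {n m : ℕ} (hnm : n < m) (A : Matrix (Fin n) (Fin m) ℝ)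
    (hURP : URP A) (n0 : ℕ) (hn1 : 1 ≤ n0) (hn0 : n0 ≤ n) :
    gammaA A n0 + 1 ≤
      sMaxSq A /
        sInf {r : ℝ | ∃ I : Finset (Fin m), I.Nonempty ∧ I.card ≤ n0 ∧
          r = sMinSq (A.submatrix id (fun j : {x // x ∈ I} => (j : Fin m)))} := by
    classical
  set M := sMaxSq A with hM
  set S := {r : ℝ | ∃ I : Finset (Fin m), I.Nonempty ∧ I.card ≤ n0 ∧
      r = sMinSq (A.submatrix id (fun j : {x // x ∈ I} => (j : Fin m)))} with hS
  set D := sInf S with hDdef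
  have hm0 : 0 < m := lt_of_le_of_lt (Nat.zero_le n) hnm
  have hSne : S.Nonempty := by
    refine ⟨_, ⟨({⟨0, hm0⟩} : Finset (Fin m)), Finset.singleton_nonempty _, ?_, rfl⟩⟩
    simpa using hn1
  have hSfin : S.Finite := by
    apply Set.Finite.subset (Set.finite_range
      (fun I : Finset (Fin m) => sMinSq (A.submatrix id (fun j : {x // x ∈ I} => (j : Fin m)))))
    rintro r ⟨I, _, _, rfl⟩
    exact ⟨I, rfl⟩
  have hSbdd : BddBelow S := by
    refine ⟨0, ?_⟩
    rintro r ⟨I, hne, _, rfl⟩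
    haveI : Nonempty {x // x ∈ I} := ⟨⟨hne.choose, hne.choose_spec⟩⟩
    exact sMinSq_nonneg _
  obtain ⟨I₀, hI₀ne, hI₀card, hD_eq⟩ := hSne.csInf_mem hSfin
  haveI : Nonempty {x // x ∈ I₀} := ⟨⟨hI₀ne.choose, hI₀ne.choose_spec⟩⟩
  have hDpos : 0 < D := by
    rw [hDdef, hD_eq]
    exact sMinSq_pos _ (urp_inj hnm hURP I₀ (le_trans hI₀card hn0) )
  have hDM : D ≤ M := by
    rw [hDdef, hD_eq]
    set v₁ : {x // x ∈ I₀} → ℝ := Pi.single (Classical.arbitrary _) 1 with hv₁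
    have hnv₁ : nsq v₁ = 1 := by
      simp [hv₁, nsq, Pi.single_apply, Finset.sum_ite_eq']
    calc sMinSq (A.submatrix id (fun j : {x // x ∈ I₀} => (j : Fin m)))
        = sMinSq (A.submatrix id (fun j : {x // x ∈ I₀} => (j : Fin m))) * nsq v₁ := by
          rw [hnv₁, mul_one]
      _ ≤ nsq ((A.submatrix id (fun j : {x // x ∈ I₀} => (j : Fin m))).mulVec v₁) :=
          sMinSq_mul_le _ _
      _ = nsq (A.mulVec (fun j => if h : j ∈ I₀ then v₁ ⟨j, h⟩ else 0)) := by
          rw [mulVec_submatrix_eq]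
      _ ≤ M * nsq (fun j : Fin m => if h : j ∈ I₀ then v₁ ⟨j, h⟩ else 0) :=
          nsq_mulVec_le_sMaxSq A _
      _ = M := by rw [nsq_ext_eq, hnv₁, mul_one]
  have hbound : gammaA A n0 ≤ M / D - 1 := by
    unfold gammaA gammaSet
    apply Real.sSup_le
    · rintro r ⟨I, s, hIcard, hAs, hsne, rfl⟩
      set a := ∑ i ∈ I, s i ^ 2 with hadef
      set b := ∑ i ∈ Iᶜ, s i ^ 2 with hbdef
      have ha0 : 0 ≤ a := Finset.sum_nonneg fun _ _ => sq_nonneg _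
      have hb0 : 0 ≤ b := Finset.sum_nonneg fun _ _ => sq_nonneg _
      set restr : {x // x ∈ I} → ℝ := fun j => s ↑j with hrestr
      set u : Fin m → ℝ := fun j => if h : j ∈ I then restr ⟨j, h⟩ else 0 with hu
      set w : Fin m → ℝ := fun j => if j ∈ I then 0 else s j with hw
      have hsum : s = u + w := by
        funext j
        by_cases h : j ∈ I <;> simp [hu, hw, hrestr, h]
      have hnsqu : nsq u = a := by
        rw [hu, nsq_ext_eq, hrestr, nsq_restr]
      have hnsqw : nsq w = b := by
        rw [show nsq w = ∑ j ∈ I, w j ^ 2 + ∑ j ∈ Iᶜ, w j ^ 2 from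
          (Finset.sum_add_sum_compl I _).symm]
        rw [Finset.sum_congr rfl (fun j hj => by rw [hw]; simp [hj] : ∀ j ∈ I, w j ^ 2 = 0)]
        rw [Finset.sum_congr rfl (fun j hj => by
          rw [hw]; simp [Finset.mem_compl.1 hj] : ∀ j ∈ Iᶜ, w j ^ 2 = s j ^ 2)]
        simp
        exact hbdef.symm
      have hbpos : 0 < b := by
        rcases lt_or_eq_of_le hb0 with h | h
        · exact h
        · exfalso
          have hw0 : ∀ j ∉ I, s j = 0 := by
            intro j hj
            have hterm := (Finset.sum_eq_zero_iff_of_nonneg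
              (fun i (_ : i ∈ Iᶜ) => sq_nonneg (s i))).1 h.symm j (Finset.mem_compl.2 hj)
            exact pow_eq_zero_iff (n := 2) (by norm_num) |>.1 hterm
          have hsu : s = u := by
            funext j
            by_cases hj : j ∈ I
            · simp [hu, hrestr, hj]
            · simp [hu, hj, hw0 j hj]
          have hAu : (A.submatrix id (fun j : {x // x ∈ I} => (j : Fin m))).mulVec restr = 0 := by
            rw [mulVec_submatrix_eq, ← hu, ← hsu, hAs]
          have hr0 := urp_inj hnm hURP I (le_trans hIcard hn0) restr hAu
          apply hsne
          funext j
          by_cases hj : j ∈ I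
          · have := congrFun hr0 ⟨j, hj⟩
            simpa [hrestr] using this
          · exact hw0 j hj
      have hAw : A.mulVec w = -(A.mulVec u) := by
        have h0 : A.mulVec u + A.mulVec w = 0 := by
          rw [← Matrix.mulVec_add, ← hsum, hAs]
        linear_combination h0
      have hDa : D * a ≤ nsq (A.mulVec u) := by
        rcases eq_or_lt_of_le ha0 with haz | hapos
        · rw [← haz, mul_zero]; exact nsq_nonneg _
        · have hIne : I.Nonempty := by
            rcases Finset.eq_empty_or_nonempty I with hI | hI
            · exfalso; rw [hadef, hI] at hapos; simp at hapos
            · exact hI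
          have hDle : D ≤ sMinSq (A.submatrix id (fun j : {x // x ∈ I} => (j : Fin m))) :=
            csInf_le hSbdd ⟨I, hIne, hIcard, rfl⟩
          calc D * a ≤ sMinSq (A.submatrix id (fun j : {x // x ∈ I} => (j : Fin m))) * a :=
                mul_le_mul_of_nonneg_right hDle ha0
            _ = sMinSq (A.submatrix id (fun j : {x // x ∈ I} => (j : Fin m))) * nsq restr := by
                rw [hrestr, nsq_restr, hadef]
            _ ≤ nsq ((A.submatrix id (fun j : {x // x ∈ I} => (j : Fin m))).mulVec restr) :=
                sMinSq_mul_le _ _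
            _ = nsq (A.mulVec u) := by rw [mulVec_submatrix_eq, ← hu]
      have step : ∀ t : ℝ, (1 - t) ^ 2 * (D * a) ≤ M * (a + t ^ 2 * b) := by
        intro t
        have h1 : A.mulVec (u + t • w) = (1 - t) • A.mulVec u := by
          rw [Matrix.mulVec_add, Matrix.mulVec_smul, hAw, sub_smul, one_smul, smul_neg]
          rfl
        have h2 : nsq (u + t • w) = a + t ^ 2 * b := by
          unfold nsq
          rw [show ∑ j, ((u + t • w) j) ^ 2 = ∑ j, (u j ^ 2 + t ^ 2 * w j ^ 2) from
            Finset.sum_congr rfl fun j _ => by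
              by_cases h : j ∈ I
              · simp [hu, hw, h]; try ring
              · simp [hu, hw, h]; try ring]
          rw [Finset.sum_add_distrib, ← Finset.mul_sum, ← hnsqu, ← hnsqw]
          rfl
        calc (1 - t) ^ 2 * (D * a) ≤ (1 - t) ^ 2 * nsq (A.mulVec u) :=
            mul_le_mul_of_nonneg_left hDa (sq_nonneg _)
          _ = nsq ((1 - t) • A.mulVec u) := (nsq_smul _ _).symm
          _ = nsq (A.mulVec (u + t • w)) := by rw [h1]
          _ ≤ M * nsq (u + t • w) := nsq_mulVec_le_sMaxSq A _
          _ = M * (a + t ^ 2 * b) := by rw [h2]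
      have key : D * (a + b) ≤ M * b := by
        rcases eq_or_lt_of_le ha0 with haz | hapos
        · rw [← haz, zero_add]
          exact mul_le_mul_of_nonneg_right hDM hb0
        · have h := step (-(a / b))
          have hbne : b ≠ 0 := ne_of_gt hbpos
          have h2 := mul_le_mul_of_nonneg_right h (sq_nonneg b)
          have lhs_eq : (1 - -(a / b)) ^ 2 * (D * a) * b ^ 2 = D * a * (a + b) ^ 2 := by
            field_simp
            ring
          have rhs_eq : M * (a + (-(a / b)) ^ 2 * b) * b ^ 2 = M * (a * b ^ 2 + a ^ 2 * b) := by
            field_simp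
            try ring
          rw [lhs_eq, rhs_eq] at h2
          have hfac : 0 < a * (a + b) := mul_pos hapos (by linarith)
          have e1 : D * (a + b) * (a * (a + b)) = D * a * (a + b) ^ 2 := by ring
          have e2 : M * b * (a * (a + b)) = M * (a * b ^ 2 + a ^ 2 * b) := by ring
          refine le_of_mul_le_mul_right ?_ hfac
          rw [e1, e2]
          exact h2
      rw [div_le_iff₀ hbpos]
      have heq : (M / D - 1) * b = (M * b - D * b) / D := by
        field_simp
      rw [heq, le_div_iff₀ hDpos]
      linarith [key]
    · have h1 : 1 ≤ M / D := (one_le_div hDpos).2 hDM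
      linarith
  linarith [hbound, div_nonneg (le_trans (le_of_lt hDpos) hDM) (le_of_lt hDpos)]
end

section
/- Let A be a real n×m matrix with n < m and let 1 ≤ n0 ≤ n. Suppose 0 ≤ δ < 1 is such that (1−δ)·‖s‖² ≤ ‖A s‖² for every s ∈ ℝ^m with at most n0 nonzero components (in particular, this holds when δ is the lower asymmetric restricted isometry constant δ_{n0}^{min} of A and δ_{n0}^{min} < 1). Then γ_A(n0) + 1 ≤ ‖A‖₂² / (1−δ), where ‖A‖₂ is the spectral norm of A. -/
open Finset
open scoped BigOperators

noncomputable section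

lemma nsq_mulVec_le {n m : ℕ} (A : Matrix (Fin n) (Fin m) ℝ) (w : Fin m → ℝ) :
    nsq (A.mulVec w) ≤ (∑ i, ∑ j, (A i j) ^ 2) * nsq w := by
  rw [nsq, Finset.sum_mul]
  apply Finset.sum_le_sum
  intro i _
  calc (A.mulVec w i) ^ 2 = (∑ j, A i j * w j) ^ 2 := by
        simp [Matrix.mulVec, dotProduct]
    _ ≤ (∑ j, (A i j) ^ 2) * ∑ j, (w j) ^ 2 :=
        Finset.sum_mul_sq_le_sq_mul_sq _ _ _
    _ = (∑ j, (A i j) ^ 2) * nsq w := rfl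

lemma sMaxSq_bdd {n m : ℕ} (A : Matrix (Fin n) (Fin m) ℝ) :
    BddAbove {r | ∃ v : Fin m → ℝ, nsq v = 1 ∧ r = nsq (A.mulVec v)} := by
  refine ⟨∑ i, ∑ j, (A i j) ^ 2, ?_⟩
  rintro r ⟨v, hv, rfl⟩
  have := nsq_mulVec_le A v
  rw [hv, mul_one] at this
  exact this

lemma le_sMaxSq {n m : ℕ} (A : Matrix (Fin n) (Fin m) ℝ) (v : Fin m → ℝ)
    (hv : nsq v = 1) : nsq (A.mulVec v) ≤ sMaxSq A :=
  le_csSup (sMaxSq_bdd A) ⟨v, hv, rfl⟩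

lemma nsq_le_sMaxSq {n m : ℕ} (A : Matrix (Fin n) (Fin m) ℝ) (v : Fin m → ℝ)
    (hv : 0 < nsq v) : nsq (A.mulVec v) ≤ sMaxSq A * nsq v := by
  set c := Real.sqrt (nsq v) with hc
  have hc0 : 0 < c := Real.sqrt_pos.2 hv
  have hcsq : c ^ 2 = nsq v := Real.sq_sqrt (le_of_lt hv)
  set u : Fin m → ℝ := fun i => v i / c with hu
  have hnu : nsq u = 1 := by
    rw [nsq]
    simp only [hu, div_pow]
    rw [← Finset.sum_div, ← nsq, ← hcsq]
    field_simp
  have hAu : A.mulVec u = fun i => A.mulVec v i / c := by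
    funext i
    simp [hu, Matrix.mulVec, dotProduct, Finset.sum_div, div_eq_mul_inv, Finset.sum_mul, mul_assoc]
  have hnAu : nsq (A.mulVec u) = nsq (A.mulVec v) / c ^ 2 := by
    rw [nsq, nsq, Finset.sum_div]
    apply Finset.sum_congr rfl
    intro i _
    rw [hAu]
    exact div_pow _ _ _
  have h := le_sMaxSq A u hnu
  rw [hnAu, hcsq, div_le_iff₀ hv] at h
  linarith [h]

lemma one_sub_le_sMaxSq {n m : ℕ} (hnm : n < m) (A : Matrix (Fin n) (Fin m) ℝ)
    (n0 : ℕ) (hn1 : 1 ≤ n0) (δ : ℝ)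
    (hRIP : ∀ s : Fin m → ℝ, l0 s ≤ n0 → (1 - δ) * nsq s ≤ nsq (A.mulVec s)) :
    1 - δ ≤ sMaxSq A := by
  have hm0 : 0 < m := lt_of_le_of_lt (Nat.zero_le n) hnm
  set j : Fin m := ⟨0, hm0⟩
  set e : Fin m → ℝ := fun i => if i = j then 1 else 0 with he
  have hne : nsq e = 1 := by
    simp [nsq, he, apply_ite (fun t : ℝ => t ^ 2)]
  have hl0 : l0 e ≤ n0 := by
    refine le_trans ?_ hn1
    have hsub : (Finset.univ.filter fun i => e i ≠ 0) ⊆ {j} := by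
      intro i hi
      simp only [Finset.mem_filter, he] at hi
      rcases hi with ⟨_, hi⟩
      simp only [Finset.mem_singleton]
      by_contra hij
      exact hi (by simp [hij])
    calc l0 e ≤ ({j} : Finset (Fin m)).card := Finset.card_le_card hsub
      _ = 1 := Finset.card_singleton j
  have h1 := hRIP e hl0
  rw [hne, mul_one] at h1
  exact h1.trans (le_sMaxSq A e hne)


end

/-- if (1−δ)‖s‖² ≤ ‖As‖² for all n0-sparse s, with 0 ≤ δ < 1, then
γ_A(n0) + 1 ≤ ‖A‖₂²/(1−δ). -/
theorem stmt_2 {n m : ℕ} (hnm : n < m) (A : Matrix (Fin n) (Fin m) ℝ)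
    (n0 : ℕ) (hn1 : 1 ≤ n0) (hn0 : n0 ≤ n) (δ : ℝ) (hδ0 : 0 ≤ δ) (hδ1 : δ < 1)
    (hRIP : ∀ s : Fin m → ℝ, l0 s ≤ n0 → (1 - δ) * nsq s ≤ nsq (A.mulVec s)) :
    gammaA A n0 + 1 ≤ sMaxSq A / (1 - δ) := by
  have hd : (0:ℝ) < 1 - δ := by linarith
  set M := sMaxSq A with hM
  have hMe : 1 - δ ≤ M := one_sub_le_sMaxSq hnm A n0 hn1 δ hRIP
  have hC : (0:ℝ) ≤ M / (1 - δ) - 1 := by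
    rw [sub_nonneg, le_div_iff₀ hd, one_mul]
    exact hMe
  rw [gammaA, ← le_sub_iff_add_le]
  apply Real.sSup_le _ hC
  rintro r ⟨I, s, hI, hAs, hs, rfl⟩
  set a := ∑ i ∈ I, (s i) ^ 2 with ha
  set b := ∑ i ∈ Iᶜ, (s i) ^ 2 with hb
  have ha0 : 0 ≤ a := Finset.sum_nonneg fun i _ => sq_nonneg _
  have hb0 : 0 ≤ b := Finset.sum_nonneg fun i _ => sq_nonneg _
  rcases eq_or_lt_of_le hb0 with hbz | hbp
  · rw [← hbz, div_zero]; exact hC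
  rcases eq_or_lt_of_le ha0 with haz | hap
  · rw [← haz, zero_div]; exact hC
  -- main case
  set x : Fin m → ℝ := fun i => if i ∈ I then s i else 0 with hx
  set y : Fin m → ℝ := fun i => if i ∈ I then 0 else s i with hy
  have hxys : x + y = s := by
    funext i
    simp only [Pi.add_apply, hx, hy]
    split <;> simp
  have hnx : nsq x = a := by
    simp only [nsq, hx, apply_ite (fun t : ℝ => t ^ 2)]
    rw [ha]
    simp [Finset.sum_ite_mem]
  have hny : nsq y = b := by
    simp only [nsq, hy, apply_ite (fun t : ℝ => t ^ 2)]
    rw [hb]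
    have hcongr : ∀ i : Fin m, (if i ∈ I then (0:ℝ) ^ 2 else s i ^ 2)
        = (if i ∈ Iᶜ then s i ^ 2 else 0) := by
      intro i; by_cases h : i ∈ I <;> simp [h]
    rw [Finset.sum_congr rfl fun i _ => hcongr i, Finset.sum_ite_mem, Finset.univ_inter]
  have hxyi : ∀ i, x i * y i = 0 := by
    intro i
    simp only [hx, hy]
    split <;> simp
  have hl0x : l0 x ≤ n0 := by
    refine le_trans (Finset.card_le_card ?_) hI
    intro i hi
    simp only [Finset.mem_filter, hx] at hi
    rcases hi with ⟨_, hi⟩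
    by_contra h
    exact hi (by simp [h])
  have hRIPx := hRIP x hl0x
  rw [hnx] at hRIPx
  have hAx : A.mulVec x = -A.mulVec y := by
    have : A.mulVec x + A.mulVec y = 0 := by
      rw [← Matrix.mulVec_add, hxys, hAs]
    exact eq_neg_of_add_eq_zero_left this
  set t : ℝ := a / b with ht
  have htpos : 0 < t := div_pos hap hbp
  set v : Fin m → ℝ := fun i => x i - t * y i with hv
  have hnv : nsq v = a + t ^ 2 * b := by
    rw [← hnx, ← hny, nsq, nsq, nsq, Finset.mul_sum, ← Finset.sum_add_distrib]
    apply Finset.sum_congr rfl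
    intro i _
    have h := hxyi i
    simp only [hv]
    linear_combination (-2 * t) * h
  have hAv : A.mulVec v = fun i => (1 + t) * A.mulVec x i := by
    have hveq : v = x + (-t) • y := by
      funext i; simp [hv]; ring
    funext i
    rw [hveq, Matrix.mulVec_add, Matrix.mulVec_smul]
    have := congrFun hAx i
    simp only [Pi.add_apply, Pi.smul_apply, Pi.neg_apply, smul_eq_mul]
    rw [show A.mulVec y i = -(A.mulVec x i) by rw [hAx]; simp]
    ring
  have hnAv : nsq (A.mulVec v) = (1 + t) ^ 2 * nsq (A.mulVec x) := by
    rw [nsq, nsq, Finset.mul_sum]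
    apply Finset.sum_congr rfl
    intro i _
    rw [hAv]
    ring
  have hvpos : 0 < nsq v := by rw [hnv]; nlinarith
  have hkey : (1 - δ) * ((1 + t) ^ 2 * a) ≤ M * (a + t ^ 2 * b) := by
    calc (1 - δ) * ((1 + t) ^ 2 * a) = (1 + t) ^ 2 * ((1 - δ) * a) := by ring
      _ ≤ (1 + t) ^ 2 * nsq (A.mulVec x) := by
          apply mul_le_mul_of_nonneg_left hRIPx (sq_nonneg _)
      _ = nsq (A.mulVec v) := hnAv.symm
      _ ≤ M * nsq v := nsq_le_sMaxSq A v hvpos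
      _ = M * (a + t ^ 2 * b) := by rw [hnv]
  -- from hkey with t = a/b deduce (1-δ)*(a+b) ≤ M*b
  have hMb : (1 - δ) * (a + b) ≤ M * b := by
    have h1 : (1 + t) ^ 2 * a = a * (a + b) ^ 2 / b ^ 2 := by
      rw [ht]; field_simp; ring
    have h2 : a + t ^ 2 * b = a * (a + b) / b := by
      rw [ht]; field_simp; ring
    rw [h1, h2] at hkey
    have habb : 0 < a * (a + b) * b := mul_pos (mul_pos hap (by linarith)) hbp
    have hkey2 : (1 - δ) * (a + b) * (a * (a + b) * b) ≤ M * b * (a * (a + b) * b) := by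
      have e1 : (1 - δ) * (a + b) * (a * (a + b) * b)
          = ((1 - δ) * (a * (a + b) ^ 2 / b ^ 2)) * b ^ 3 := by
        field_simp
      have e2 : M * b * (a * (a + b) * b) = (M * (a * (a + b) / b)) * b ^ 3 := by
        field_simp
      rw [e1, e2]
      exact mul_le_mul_of_nonneg_right hkey (by positivity)
    exact le_of_mul_le_mul_right hkey2 habb
  have h2 : (1 - δ) * a ≤ (1 - δ) * ((M / (1 - δ) - 1) * b) := by
    have e3 : (1 - δ) * ((M / (1 - δ) - 1) * b) = M * b - (1 - δ) * b := by
      field_simp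
    rw [e3]; linarith [hMb]
  have h3 : a ≤ (M / (1 - δ) - 1) * b := le_of_mul_le_mul_left h2 hd
  rw [div_le_iff₀ hbp]
  exact h3
end

section
/- If A is a real n×m matrix with n < m satisfying the URP, then for every n0 ≤ n the quantity γ_A(n0) is finite; that is, there exists a real constant M such that ‖π_I(s)‖² ≤ M·‖π_{I^c}(s)‖² for every index set I ⊆ {1,…,m} with |I| ≤ n0 and every s ∈ ℝ^m with A s = 0. -/
open Finset
open scoped BigOperators

/-- under the URP, γ_A(n0) is finite: there is a constant `M` with
‖π_I(s)‖² ≤ M·‖π_{Iᶜ}(s)‖² for all `I` with `|I| ≤ n0` and all null-space vectors `s`. -/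
theorem stmt_3 {n m : ℕ} (hnm : n < m) (A : Matrix (Fin n) (Fin m) ℝ)
    (hURP : URP A) (n0 : ℕ) (hn0 : n0 ≤ n) :
    ∃ M : ℝ, ∀ (I : Finset (Fin m)) (s : Fin m → ℝ), I.card ≤ n0 → A.mulVec s = 0 →
      ∑ i ∈ I, (s i) ^ 2 ≤ M * ∑ i ∈ Iᶜ, (s i) ^ 2 := by
  classical
  have key : ∀ I : Finset (Fin m), I.card ≤ n0 → ∃ M : ℝ, ∀ s : Fin m → ℝ,
      A.mulVec s = 0 → ∑ i ∈ I, (s i) ^ 2 ≤ M * ∑ i ∈ Iᶜ, (s i) ^ 2 := by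
    intro I hI
    -- Step 1: a nullspace vector vanishing outside I is zero.
    have hzero : ∀ s : Fin m → ℝ, A.mulVec s = 0 → (∀ i, i ∉ I → s i = 0) → s = 0 := by
      intro s hs hout
      obtain ⟨J, hIJ, hJcard⟩ := Finset.exists_superset_card_eq (hI.trans hn0)
        (by simpa using hnm.le)
      set g : Fin n → Fin m := fun k => (J.orderIsoOfFin hJcard k : Fin m) with hg
      have hginj : Function.Injective g := fun a b hab => by
        have := (J.orderIsoOfFin hJcard).injective (Subtype.ext hab); exact this
      have hsub : (A.submatrix id g).mulVec (s ∘ g) = 0 := by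
        funext i
        have hrestrict : ∑ j ∈ J, A i j * s j = ∑ j, A i j * s j := by
          refine Finset.sum_subset J.subset_univ ?_
          intro j _ hj
          rw [hout j (fun hjI => hj (hIJ hjI)), mul_zero]
        have hbij : ∑ k, A i (g k) * s (g k) = ∑ j ∈ J, A i j * s j := by
          rw [← Finset.sum_coe_sort J (fun j => A i j * s j)]
          exact Fintype.sum_equiv (J.orderIsoOfFin hJcard).toEquiv _ _ (fun k => rfl)
        have hL0 : (A.submatrix id g).mulVec (s ∘ g) i = ∑ k, A i (g k) * s (g k) := by
          simp [Matrix.mulVec, dotProduct]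
        show (A.submatrix id g).mulVec (s ∘ g) i = 0
        rw [hL0, hbij, hrestrict]
        simpa [Matrix.mulVec, dotProduct] using congrFun hs i
      have hunit := hURP g hginj
      have hinj := Matrix.mulVec_injective_iff_isUnit.2 hunit
      have hcg : s ∘ g = 0 := by
        apply hinj
        rw [hsub, Matrix.mulVec_zero]
      funext j
      by_cases hj : j ∈ J
      · have : j = g ((J.orderIsoOfFin hJcard).symm ⟨j, hj⟩) :=
          (congrArg Subtype.val ((J.orderIsoOfFin hJcard).apply_symm_apply ⟨j, hj⟩)).symm
        rw [this]
        exact congrFun hcg _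
      · exact hout j (fun hjI => hj (hIJ hjI))
    -- Step 2: build continuous linear maps.
    set N := LinearMap.ker A.mulVecLin with hN
    let T : N →ₗ[ℝ] EuclideanSpace ℝ {i // i ∈ Iᶜ} :=
      { toFun := fun s => WithLp.toLp 2 (fun i => s.1 i.1)
        map_add' := fun a b => rfl
        map_smul' := fun c a => rfl }
    let Pr : N →ₗ[ℝ] EuclideanSpace ℝ {i // i ∈ I} :=
      { toFun := fun s => WithLp.toLp 2 (fun i => s.1 i.1)
        map_add' := fun a b => rfl
        map_smul' := fun c a => rfl }
    have hTker : LinearMap.ker T = ⊥ := by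
      rw [LinearMap.ker_eq_bot']
      intro s hsT
      have hs0 : (s : Fin m → ℝ) = 0 := by
        apply hzero _ (by rw [← Matrix.mulVecLin_apply]; exact LinearMap.mem_ker.1 s.2)
        intro i hi
        exact congrArg (fun v : EuclideanSpace ℝ {i // i ∈ Iᶜ} => WithLp.ofLp v ⟨i, Finset.mem_compl.2 hi⟩) hsT
      exact Subtype.ext hs0
    obtain ⟨L, hL⟩ := T.exists_leftInverse_of_injective hTker
    let P := (Pr.comp L).toContinuousLinearMap
    refine ⟨‖P‖ ^ 2, fun s hs => ?_⟩
    have hsmem : s ∈ N := by rw [hN, LinearMap.mem_ker, Matrix.mulVecLin_apply]; exact hs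
    set s' : N := ⟨s, hsmem⟩ with hs'
    have hLT : L (T s') = s' := LinearMap.congr_fun hL s'
    have hPe : Pr s' = P (T s') := by
      show Pr s' = Pr (L (T s'))
      rw [hLT]
    have hnorm : ‖Pr s'‖ ≤ ‖P‖ * ‖T s'‖ := by
      rw [hPe]; exact P.le_opNorm _
    have hsq : ‖Pr s'‖ ^ 2 ≤ ‖P‖ ^ 2 * ‖T s'‖ ^ 2 := by
      rw [← mul_pow]
      exact pow_le_pow_left₀ (norm_nonneg _) hnorm 2
    have e1 : ‖Pr s'‖ ^ 2 = ∑ i ∈ I, (s i) ^ 2 := by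
      rw [EuclideanSpace.norm_eq, Real.sq_sqrt (by positivity)]
      rw [← Finset.sum_coe_sort I (fun i => s i ^ 2)]
      exact Finset.sum_congr rfl (fun i _ => by simp [Pr, sq_abs]; rfl)
    have e2 : ‖T s'‖ ^ 2 = ∑ i ∈ Iᶜ, (s i) ^ 2 := by
      rw [EuclideanSpace.norm_eq, Real.sq_sqrt (by positivity)]
      rw [← Finset.sum_coe_sort Iᶜ (fun i => s i ^ 2)]
      exact Finset.sum_congr rfl (fun i _ => by simp [T, sq_abs]; rfl)
    rw [← e1, ← e2]; exact hsq
  choose f hf using key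
  refine ⟨∑ J : Finset (Fin m), if h : J.card ≤ n0 then max 0 (f J h) else 0, ?_⟩
  intro I s hI hs
  have hle : f I hI ≤ ∑ J : Finset (Fin m), if h : J.card ≤ n0 then max 0 (f J h) else 0 := by
    calc f I hI ≤ max 0 (f I hI) := le_max_right _ _
    _ = if h : I.card ≤ n0 then max 0 (f I h) else 0 := by rw [dif_pos hI]
    _ ≤ _ := Finset.single_le_sum (f := fun J => if h : J.card ≤ n0 then max 0 (f J h) else 0)
        (fun J _ => by by_cases h : J.card ≤ n0 <;> simp [h]) (Finset.mem_univ I)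
  calc ∑ i ∈ I, (s i) ^ 2 ≤ f I hI * ∑ i ∈ Iᶜ, (s i) ^ 2 := hf I hI s hs
  _ ≤ _ := mul_le_mul_of_nonneg_right hle (by positivity)
end

section
/- Let A be a real n×m matrix with n < m satisfying the URP, let 1 ≤ n0 ≤ n, let γ = γ_A(n0) (assumed finite and positive), and let σ > 0. If s ∈ ℝ^m satisfies ‖s‖_{0,σ} ≤ n0 (at most n0 components of s have absolute value greater than σ), then for every w ∈ ℝ^m with A w = 0 one has Σ_{i=1}^m g_γ(s_i/σ)·w_i² ≤ 0; that is, the Hessian of F_{γ,σ} restricted to the affine solution set {s : A s = x} is negative semi-definite at s. -/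
open Finset
open scoped BigOperators

lemma urp_support {n m : ℕ} (hnm : n < m) (A : Matrix (Fin n) (Fin m) ℝ)
    (hURP : URP A) (I : Finset (Fin m)) (hI : I.card ≤ n)
    (w : Fin m → ℝ) (hw : A.mulVec w = 0) (hsupp : ∀ i ∉ I, w i = 0) : w = 0 := by
  obtain ⟨J, hIJ, hJcard⟩ := Finset.exists_superset_card_eq hI (by simpa using hnm.le)
  set e := J.orderIsoOfFin hJcard with he
  set g : Fin n → Fin m := fun k => (e k : Fin m) with hg
  have ginj : Function.Injective g := fun a b h => e.injective (Subtype.ext h)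
  have hU : IsUnit (A.submatrix id g) := hURP g ginj
  have hwJ : ∀ j ∉ J, w j = 0 := fun j hj => hsupp j (fun hjI => hj (hIJ hjI))
  have hmv : (A.submatrix id g).mulVec (w ∘ g) = 0 := by
    funext i
    have : ∑ k : Fin n, A i (g k) * w (g k) = ∑ j : Fin m, A i j * w j := by
      have h1 : ∑ k : Fin n, A i (g k) * w (g k)
          = ∑ j : J, A i (j : Fin m) * w (j : Fin m) :=
        Equiv.sum_comp e.toEquiv (fun j : J => A i (j : Fin m) * w (j : Fin m))
      rw [h1, Finset.sum_coe_sort J (fun j => A i j * w j)]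
      exact Finset.sum_subset J.subset_univ (fun j _ hj => by rw [hwJ j hj, mul_zero])
    have h0 := congrFun hw i
    simp only [Matrix.mulVec, dotProduct, Pi.zero_apply] at h0 ⊢
    simpa [Matrix.submatrix_apply, this] using h0
  have hwg : w ∘ g = 0 := by
    have := hU.invertible
    calc w ∘ g = (1 : Matrix (Fin n) (Fin n) ℝ).mulVec (w ∘ g) := by
          simp [Matrix.one_mulVec]
      _ = (⅟(A.submatrix id g) * (A.submatrix id g)).mulVec (w ∘ g) := by
          rw [invOf_mul_self]
      _ = (⅟(A.submatrix id g)).mulVec ((A.submatrix id g).mulVec (w ∘ g)) := by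
          rw [Matrix.mulVec_mulVec]
      _ = 0 := by rw [hmv, Matrix.mulVec_zero]
  funext i
  by_cases hi : i ∈ J
  · have : w (g (e.symm ⟨i, hi⟩)) = 0 := congrFun hwg (e.symm ⟨i, hi⟩)
    simpa [hg, OrderIso.apply_symm_apply] using this
  · exact hwJ i hi

/-- if at most n0 components of s exceed σ in absolute value, the Hessian of
F_{γ,σ} restricted to the affine solution set is negative semi-definite at s. -/
theorem stmt_5 {n m : ℕ} (hnm : n < m) (A : Matrix (Fin n) (Fin m) ℝ)
    (hURP : URP A) (n0 : ℕ) (hn1 : 1 ≤ n0) (hn0 : n0 ≤ n)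
    (γ : ℝ) (hγ : γ = gammaA A n0) (hγpos : 0 < γ) (hbdd : BddAbove (gammaSet A n0))
    (σ : ℝ) (hσ : 0 < σ) (s : Fin m → ℝ) (hs : l0s s σ ≤ n0) :
    ∀ w : Fin m → ℝ, A.mulVec w = 0 → ∑ i, gsp γ (s i / σ) * (w i) ^ 2 ≤ 0 := by
  intro w hw
  set I : Finset (Fin m) := Finset.univ.filter (fun i => σ < |s i|) with hIdef
  have hIcard : I.card ≤ n0 := hs
  have hsplit : ∑ i, gsp γ (s i / σ) * (w i) ^ 2
      = ∑ i ∈ I, gsp γ (s i / σ) * (w i) ^ 2 + ∑ i ∈ Iᶜ, gsp γ (s i / σ) * (w i) ^ 2 :=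
    (Finset.sum_add_sum_compl I _).symm
  set a := ∑ i ∈ I, (w i) ^ 2 with hadef
  set b := ∑ i ∈ Iᶜ, (w i) ^ 2 with hbdef
  have h1γ : (0:ℝ) < 1 + γ := by linarith
  have hγγ : (0:ℝ) < γ ^ 2 + γ := by nlinarith
  -- bound on I
  have hbI : ∑ i ∈ I, gsp γ (s i / σ) * (w i) ^ 2 ≤ 2 / (γ ^ 2 + γ) * a := by
    rw [hadef, Finset.mul_sum]
    refine Finset.sum_le_sum (fun i _ => ?_)
    refine mul_le_mul_of_nonneg_right ?_ (sq_nonneg _)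
    unfold gsp
    split_ifs with h1 h2
    · have : (0:ℝ) ≤ 2 / (γ ^ 2 + γ) := by positivity
      have : -2 / (1 + γ) ≤ 0 := by
        apply div_nonpos_of_nonpos_of_nonneg <;> linarith
      linarith
    · exact le_rfl
    · positivity
  -- equality on Iᶜ
  have hbIc : ∑ i ∈ Iᶜ, gsp γ (s i / σ) * (w i) ^ 2 = -2 / (1 + γ) * b := by
    rw [hbdef, Finset.mul_sum]
    refine Finset.sum_congr rfl (fun i hi => ?_)
    have hi' : ¬ σ < |s i| := by
      simpa [hIdef] using (Finset.mem_compl.mp hi)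
    have habs : |s i / σ| ≤ 1 := by
      rw [abs_div, abs_of_pos hσ, div_le_one hσ]
      linarith [not_lt.mp hi']
    simp [gsp, habs]
  by_cases hw0 : w = 0
  · simp [hw0]
  -- b > 0
  have hb0 : 0 < b := by
    rcases lt_or_eq_of_le (Finset.sum_nonneg (fun i _ => sq_nonneg (w i)) : (0:ℝ) ≤ b) with h | h
    · exact h
    · exfalso
      have hz : ∀ i ∈ Iᶜ, (w i) ^ 2 = 0 := by
        intro i hi
        have := (Finset.sum_eq_zero_iff_of_nonneg (fun i _ => sq_nonneg (w i))).mp h.symm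
        exact this i hi
      have hsupp : ∀ i ∉ I, w i = 0 := fun i hi =>
        by have := hz i (Finset.mem_compl.mpr hi); nlinarith [this]
      exact hw0 (urp_support hnm A hURP I (hIcard.trans hn0) w hw hsupp)
  -- a/b ∈ gammaSet hence a ≤ γ * b
  have hmem : a / b ∈ gammaSet A n0 := ⟨I, w, hIcard, hw, hw0, rfl⟩
  have hab : a / b ≤ γ := hγ ▸ le_csSup hbdd hmem
  have key : a ≤ γ * b := by
    rw [div_le_iff₀ hb0] at hab
    linarith
  -- conclude
  have hfinal : 2 / (γ ^ 2 + γ) * a + -2 / (1 + γ) * b ≤ 0 := by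
    have h1 : 2 / (γ ^ 2 + γ) * a ≤ 2 / (γ ^ 2 + γ) * (γ * b) :=
      mul_le_mul_of_nonneg_left key (by positivity)
    have h2 : 2 / (γ ^ 2 + γ) * (γ * b) = 2 / (1 + γ) * b := by
      field_simp
      ring
    rw [h2] at h1
    have : -2 / (1 + γ) * b = -(2 / (1 + γ) * b) := by ring
    linarith
  rw [hsplit]
  linarith
end

section
/- Let A be a real n×m matrix with n < m satisfying the URP, let 1 ≤ n0 ≤ n, let γ = γ_A(n0) (assumed finite and positive), and let σ > 0. If s ∈ ℝ^m satisfies F_{γ,σ}(s) ≥ m − n0/(1+γ), then ‖s‖_{0,σ} ≤ n0, and consequently Σ_{i=1}^m g_γ(s_i/σ)·w_i² ≤ 0 for every w ∈ ℝ^m with A w = 0 (i.e., F_{γ,σ} restricted to {s : A s = x} is concave at every such point). -/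
open Finset
open scoped BigOperators

/-- A null-space vector supported on at most `n` coordinates is zero, under URP. -/
lemma urp_support_zero {n m : ℕ} (hnm : n ≤ m) (A : Matrix (Fin n) (Fin m) ℝ)
    (hURP : URP A) (w : Fin m → ℝ) (hw : A.mulVec w = 0) (S : Finset (Fin m))
    (hS : S.card ≤ n) (hsupp : ∀ i ∉ S, w i = 0) : w = 0 := by
  obtain ⟨T, hST, hT⟩ := Finset.exists_superset_card_eq hS (by simpa using hnm)
  have e : Fin n ≃ {x // x ∈ T} := (Fintype.equivFinOfCardEq (by simpa using hT)).symm
  set g : Fin n → Fin m := fun i => (e i : Fin m) with hg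
  have hginj : Function.Injective g := fun a b hab => e.injective (Subtype.ext hab)
  have hT0 : ∀ i ∉ T, w i = 0 := fun i hi => hsupp i (fun h => hi (hST h))
  have hker : (A.submatrix id g).mulVec (w ∘ g) = 0 := by
    funext j
    have : (A.submatrix id g).mulVec (w ∘ g) j = ∑ i : Fin n, A j (g i) * w (g i) := by
      simp [Matrix.mulVec, Matrix.submatrix, dotProduct]
    rw [this]
    have hsum : ∑ i : Fin n, A j (g i) * w (g i) = ∑ l ∈ T, A j l * w l := by
      rw [← Finset.sum_attach T (fun l => A j l * w l)]
      exact Fintype.sum_equiv e _ _ (fun i => rfl)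
    rw [hsum]
    have : ∑ l ∈ T, A j l * w l = ∑ l : Fin m, A j l * w l := by
      refine Finset.sum_subset (Finset.subset_univ T) (fun l _ hl => ?_)
      rw [hT0 l hl, mul_zero]
    rw [this]
    have := congrFun hw j
    simpa [Matrix.mulVec, dotProduct] using this
  have hinj := Matrix.mulVec_injective_iff_isUnit.mpr (hURP g hginj)
  have hwg : w ∘ g = 0 := by
    apply hinj
    simpa using hker
  funext i
  by_cases hi : i ∈ T
  · obtain ⟨k, hk⟩ := e.surjective ⟨i, hi⟩
    have : g k = i := by simp [hg, hk]
    rw [← this]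
    exact congrFun hwg k
  · exact hT0 i hi

/-- if F_{γ,σ}(s) ≥ m − n0/(1+γ) then ‖s‖_{0,σ} ≤ n0, and consequently the
Hessian of F_{γ,σ} restricted to the affine solution set is negative semi-definite at s. -/
theorem stmt_6 {n m : ℕ} (hnm : n < m) (A : Matrix (Fin n) (Fin m) ℝ)
    (hURP : URP A) (n0 : ℕ) (hn1 : 1 ≤ n0) (hn0 : n0 ≤ n)
    (γ : ℝ) (hγ : γ = gammaA A n0) (hγpos : 0 < γ) (hbdd : BddAbove (gammaSet A n0))
    (σ : ℝ) (hσ : 0 < σ) (s : Fin m → ℝ)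
    (hF : (m : ℝ) - n0 / (1 + γ) ≤ Fsp γ σ s) :
    l0s s σ ≤ n0 ∧
      ∀ w : Fin m → ℝ, A.mulVec w = 0 → ∑ i, gsp γ (s i / σ) * (w i) ^ 2 ≤ 0 := by
  have h1γ : 0 < 1 + γ := by linarith
  have hγγ : 0 < γ ^ 2 + γ := by nlinarith
  set I : Finset (Fin m) := Finset.univ.filter (fun i => σ < |s i|) with hI
  -- relation between |s i / σ| ≤ 1 and membership in I
  have habs : ∀ i : Fin m, |s i / σ| ≤ 1 ↔ i ∉ I := by
    intro i
    rw [abs_div, abs_of_pos hσ, div_le_one hσ]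
    simp [hI, not_lt]
  -- bound on fsp
  have hf_le_one : ∀ u : ℝ, fsp γ u ≤ 1 := by
    intro u
    unfold fsp
    split_ifs with h1 h2
    · have := div_nonneg (sq_nonneg u) (le_of_lt h1γ)
      linarith
    · push_neg at h1
      have h3 : |u| - γ - 1 ≤ 0 := by linarith
      have h4 : -γ < |u| - γ - 1 := by linarith
      rw [div_le_one hγγ]
      nlinarith
    · linarith
  have hf_le : ∀ u : ℝ, ¬ (|u| ≤ 1) → fsp γ u ≤ 1 - 1 / (1 + γ) := by
    intro u h1
    push_neg at h1
    have key : (0:ℝ) < 1 - 1 / (1 + γ) ∨ True := Or.inr trivial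
    unfold fsp
    rw [if_neg (by push_neg; exact h1)]
    have hrhs : 1 - 1 / (1 + γ) = γ / (1 + γ) := by field_simp; ring
    rw [hrhs]
    split_ifs with h2
    · have h3 : |u| - γ - 1 ≤ 0 := by linarith
      have h4 : -γ < |u| - γ - 1 := by linarith
      rw [div_le_div_iff₀ hγγ h1γ]
      nlinarith [mul_nonneg (by linarith : (0:ℝ) ≤ 2*γ+1-|u|) (by linarith : (0:ℝ) ≤ |u|-1), hγpos, sq_nonneg (|u|-γ-1)]
    · positivity
  -- first part : l0s s σ ≤ n0
  have hcard : l0s s σ ≤ n0 := by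
    by_contra hc
    push_neg at hc
    have hkI : l0s s σ = I.card := rfl
    have hsplit : Fsp γ σ s = (∑ i ∈ I, fsp γ (s i / σ)) + ∑ i ∈ Iᶜ, fsp γ (s i / σ) :=
      (Finset.sum_add_sum_compl I _).symm
    have hb1 : ∑ i ∈ I, fsp γ (s i / σ) ≤ I.card * (1 - 1 / (1 + γ)) := by
      rw [← nsmul_eq_mul]
      apply Finset.sum_le_card_nsmul
      intro i hi
      apply hf_le
      rw [habs i]
      simp
      simpa [hI] using hi
    have hb2 : ∑ i ∈ Iᶜ, fsp γ (s i / σ) ≤ Iᶜ.card * 1 := by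
      rw [← nsmul_eq_mul]
      exact Finset.sum_le_card_nsmul _ _ _ (fun i _ => hf_le_one _)
    have hcards : (I.card : ℝ) + Iᶜ.card = m := by
      have h := Finset.card_add_card_compl I
      rw [Fintype.card_fin] at h
      exact_mod_cast h
    have hFle : Fsp γ σ s ≤ (m : ℝ) - I.card / (1 + γ) := by
      rw [hsplit]
      have : (I.card : ℝ) * (1 - 1 / (1 + γ)) + Iᶜ.card * 1 = (m : ℝ) - I.card * (1 / (1 + γ)) := by
        rw [← hcards]; ring
      calc (∑ i ∈ I, fsp γ (s i / σ)) + ∑ i ∈ Iᶜ, fsp γ (s i / σ)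
          ≤ (I.card : ℝ) * (1 - 1 / (1 + γ)) + Iᶜ.card * 1 := add_le_add hb1 hb2
        _ = (m : ℝ) - I.card * (1 / (1 + γ)) := this
        _ = (m : ℝ) - I.card / (1 + γ) := by ring
    have hle : (I.card : ℝ) / (1 + γ) ≤ (n0 : ℝ) / (1 + γ) := by linarith
    have : (I.card : ℝ) ≤ n0 := by
      rwa [div_le_div_iff_of_pos_right h1γ] at hle
    have : I.card ≤ n0 := by exact_mod_cast this
    omega
  refine ⟨hcard, ?_⟩
  intro w hw
  by_cases hw0 : w = 0
  · simp [hw0]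
  -- Σ_{Iᶜ} w² > 0
  have hIc_pos : 0 < ∑ i ∈ Iᶜ, (w i) ^ 2 := by
    rcases (Finset.sum_nonneg (fun i _ => sq_nonneg (w i))).lt_or_eq with h | h
    · exact h
    · exfalso
      apply hw0
      have hzero : ∀ i ∈ Iᶜ, w i = 0 := by
        intro i hi
        have := (Finset.sum_eq_zero_iff_of_nonneg (fun i _ => sq_nonneg (w i))).mp h.symm i hi
        exact pow_eq_zero_iff (n := 2) (by norm_num) |>.mp this
      have hIcard : I.card ≤ n := le_trans hcard hn0
      refine urp_support_zero (le_of_lt hnm) A hURP w hw I hIcard ?_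
      intro i hi
      exact hzero i (by simpa using hi)
  -- the ratio is in gammaSet, hence ≤ γ
  have hratio : (∑ i ∈ I, (w i) ^ 2) ≤ γ * ∑ i ∈ Iᶜ, (w i) ^ 2 := by
    have hmem : (∑ i ∈ I, (w i) ^ 2) / (∑ i ∈ Iᶜ, (w i) ^ 2) ∈ gammaSet A n0 :=
      ⟨I, w, hcard, hw, hw0, rfl⟩
    have hle : (∑ i ∈ I, (w i) ^ 2) / (∑ i ∈ Iᶜ, (w i) ^ 2) ≤ γ := by
      rw [hγ]; exact le_csSup hbdd hmem
    rw [div_le_iff₀ hIc_pos] at hle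
    linarith
  -- bound the Hessian sum
  have hsum_split : ∑ i, gsp γ (s i / σ) * (w i) ^ 2 =
      (∑ i ∈ I, gsp γ (s i / σ) * (w i) ^ 2) + ∑ i ∈ Iᶜ, gsp γ (s i / σ) * (w i) ^ 2 :=
    (Finset.sum_add_sum_compl I _).symm
  have hbI : ∑ i ∈ I, gsp γ (s i / σ) * (w i) ^ 2 ≤ (2 / (γ ^ 2 + γ)) * ∑ i ∈ I, (w i) ^ 2 := by
    rw [Finset.mul_sum]
    apply Finset.sum_le_sum
    intro i hi
    have hgle : gsp γ (s i / σ) ≤ 2 / (γ ^ 2 + γ) := by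
      unfold gsp
      split_ifs with h1 h2
      · have : (0:ℝ) < 2 / (γ ^ 2 + γ) := by positivity
        have : (-2:ℝ) / (1 + γ) ≤ 0 := by
          apply div_nonpos_of_nonpos_of_nonneg <;> linarith
        linarith
      · exact le_refl _
      · positivity
    exact mul_le_mul_of_nonneg_right hgle (sq_nonneg _)
  have hbIc : ∑ i ∈ Iᶜ, gsp γ (s i / σ) * (w i) ^ 2 = (-2 / (1 + γ)) * ∑ i ∈ Iᶜ, (w i) ^ 2 := by
    rw [Finset.mul_sum]
    apply Finset.sum_congr rfl
    intro i hi
    have h1 : |s i / σ| ≤ 1 := (habs i).mpr (by simpa using hi)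
    unfold gsp
    rw [if_pos h1]
  have hkey : (2 / (γ ^ 2 + γ)) * ∑ i ∈ I, (w i) ^ 2 ≤
      (2 / (1 + γ)) * ∑ i ∈ Iᶜ, (w i) ^ 2 := by
    have h2pos : (0:ℝ) < 2 / (γ ^ 2 + γ) := by positivity
    calc (2 / (γ ^ 2 + γ)) * ∑ i ∈ I, (w i) ^ 2
        ≤ (2 / (γ ^ 2 + γ)) * (γ * ∑ i ∈ Iᶜ, (w i) ^ 2) :=
          mul_le_mul_of_nonneg_left hratio (le_of_lt h2pos)
      _ = (2 / (1 + γ)) * ∑ i ∈ Iᶜ, (w i) ^ 2 := by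
          rw [← mul_assoc]
          congr 1
          rw [div_mul_eq_mul_div, div_eq_div_iff (ne_of_gt hγγ) (ne_of_gt h1γ)]
          ring
  rw [hsum_split, hbIc]
  have : (-2 / (1 + γ)) * ∑ i ∈ Iᶜ, (w i) ^ 2 = -((2 / (1 + γ)) * ∑ i ∈ Iᶜ, (w i) ^ 2) := by
    ring
  rw [this]
  linarith [hbI, hkey]
end

section
/- Let A be a real n×m matrix with n < m satisfying the URP, let 1 ≤ n0 ≤ n, let γ = γ_A(n0) (finite and positive), σ > 0, and x ∈ ℝⁿ. Suppose there exists s0 ∈ S_x with k = ‖s0‖₀ ≤ n0/(2+2γ). Let P denote the orthogonal projection of ℝ^m onto the null space of A. If ŝ ∈ S_x satisfies F_{γ,σ}(ŝ) ≥ m − n0/(2+2γ), and α : [0,∞) → ℝ^m is differentiable with α(0) = ŝ and α′(t) = P ∇F_{γ,σ}(α(t)) for all t ≥ 0, then α(t) converges as t → ∞ to a point s* ∈ S_x which is a global maximizer of F_{γ,σ} over S_x, and F_{γ,σ}(s*) ≥ m − k. -/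
open Finset
open scoped BigOperators

open Finset

variable {γ : ℝ}

lemma fsp_zero (hγ : 0 < γ) : fsp γ 0 = 1 := by
  simp [fsp]

lemma fsp_of_abs_le (h : |u| ≤ 1) : fsp γ u = 1 - u^2/(1+γ) := by
  simp [fsp, h]

lemma fsp_of_mid (h1 : ¬ |u| ≤ 1) (h2 : |u| ≤ 1 + γ) : fsp γ u = (|u| - γ - 1)^2/(γ^2+γ) := by
  simp [fsp, h1, h2]

lemma fsp_of_large (hγ : 0 < γ) (h : ¬ |u| ≤ 1 + γ) : fsp γ u = 0 := by
  have h1 : ¬ |u| ≤ 1 := by intro h'; exact h (by linarith)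
  simp [fsp, h1, h]

lemma fsp_nonneg (hγ : 0 < γ) (u : ℝ) : 0 ≤ fsp γ u := by
  by_cases h1 : |u| ≤ 1
  · rw [fsp_of_abs_le h1]
    have : u^2 ≤ 1 := by nlinarith [abs_nonneg u, sq_abs u]
    have : u^2/(1+γ) ≤ 1/(1+γ) := by apply div_le_div_of_nonneg_right <;> nlinarith
    have : 1/(1+γ) ≤ 1 := by rw [div_le_one (by linarith)]; linarith
    linarith
  · by_cases h2 : |u| ≤ 1 + γ
    · rw [fsp_of_mid h1 h2]; positivity
    · rw [fsp_of_large hγ h2]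

lemma fsp_le_one (hγ : 0 < γ) (u : ℝ) : fsp γ u ≤ 1 := by
  by_cases h1 : |u| ≤ 1
  · rw [fsp_of_abs_le h1]
    have : 0 ≤ u^2/(1+γ) := by positivity
    linarith
  · by_cases h2 : |u| ≤ 1 + γ
    · rw [fsp_of_mid h1 h2]
      rw [div_le_one (by positivity)]
      have h1' := not_le.mp h1
      nlinarith
    · rw [fsp_of_large hγ h2]; linarith

lemma fsp_le_of_one_lt (hγ : 0 < γ) (h : 1 < |u|) : fsp γ u ≤ γ/(1+γ) := by
  by_cases h2 : |u| ≤ 1 + γ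
  · rw [fsp_of_mid (not_le.mpr h) h2]
    rw [div_le_div_iff₀ (by positivity) (by positivity)]
    nlinarith [mul_nonneg (by linarith : (0:ℝ) ≤ |u| - 1) (by linarith : (0:ℝ) ≤ 2*γ+1-|u|), hγ]
  · rw [fsp_of_large hγ h2]; positivity

lemma fspDeriv_of_abs_le (h : |u| ≤ 1) : fspDeriv γ u = -2*u/(1+γ) := by
  simp [fspDeriv, h]

lemma fspDeriv_of_mid_pos (hγ : 0 < γ) (h1 : 1 < u) (h2 : u ≤ 1+γ) :
    fspDeriv γ u = 2*(u-γ-1)/(γ^2+γ) := by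
  have hu0 : 0 < u := by linarith
  have ha : |u| = u := abs_of_pos hu0
  have h1' : ¬ |u| ≤ 1 := by rw [ha]; linarith
  have h2' : |u| ≤ 1 + γ := by rw [ha]; linarith
  rw [fspDeriv, if_neg h1', if_pos h2', ha, Real.sign_of_pos hu0, mul_one]

lemma fspDeriv_of_mid_neg (hγ : 0 < γ) (h1 : u < -1) (h2 : -(1+γ) ≤ u) :
    fspDeriv γ u = -(2*(-u-γ-1)/(γ^2+γ)) := by
  have hu0 : u < 0 := by linarith
  have ha : |u| = -u := abs_of_neg hu0
  have h1' : ¬ |u| ≤ 1 := by rw [ha]; linarith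
  have h2' : |u| ≤ 1 + γ := by rw [ha]; linarith
  rw [fspDeriv, if_neg h1', if_pos h2', ha, Real.sign_of_neg hu0]
  ring

lemma fspDeriv_of_large (hγ : 0 < γ) (h : 1 + γ < |u|) : fspDeriv γ u = 0 := by
  have h1 : ¬ |u| ≤ 1 := by push_neg; linarith
  have h2 : ¬ |u| ≤ 1 + γ := by push_neg; linarith
  simp [fspDeriv, h1, h2]

private lemma region (hγ : 0 < γ) (u : ℝ) :
    u < -(1+γ) ∨ (-(1+γ) ≤ u ∧ u < -1) ∨ (-1 ≤ u ∧ u ≤ 1) ∨ (1 < u ∧ u ≤ 1+γ) ∨ 1+γ < u := by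
  rcases lt_or_ge u (-(1+γ)) with h | h
  · exact Or.inl h
  rcases lt_or_ge u (-1) with h2 | h2
  · exact Or.inr (Or.inl ⟨h, h2⟩)
  rcases le_or_gt u 1 with h3 | h3
  · exact Or.inr (Or.inr (Or.inl ⟨h2, h3⟩))
  rcases le_or_gt u (1+γ) with h4 | h4
  · exact Or.inr (Or.inr (Or.inr (Or.inl ⟨h3, h4⟩)))
  · exact Or.inr (Or.inr (Or.inr (Or.inr h4)))

set_option maxHeartbeats 1000000 in
lemma fspDeriv_le (hγ : 0 < γ) {a b : ℝ} (hab : a ≤ b) :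
    fspDeriv γ b - fspDeriv γ a ≤ 2/(γ^2+γ) * (b - a) := by
  have hγ1 : (0:ℝ) < 1 + γ := by linarith
  have hγ2 : (0:ℝ) < γ^2 + γ := by positivity
  have h1ne : (1+γ) ≠ 0 := ne_of_gt hγ1
  have hγne : γ ≠ 0 := ne_of_gt hγ
  have hfac : γ^2+γ = γ*(1+γ) := by ring
  rw [div_mul_eq_mul_div, le_div_iff₀ hγ2, sub_mul, hfac]
  rcases region hγ a with ha | ⟨ha1, ha2⟩ | ⟨ha1, ha2⟩ | ⟨ha1, ha2⟩ | ha <;>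
    rcases region hγ b with hb | ⟨hb1, hb2⟩ | ⟨hb1, hb2⟩ | ⟨hb1, hb2⟩ | hb
  · have Ma : fspDeriv γ a * (γ*(1+γ)) = 0 := by
      rw [show fspDeriv γ a = 0 from fspDeriv_of_large hγ (by rw [abs_of_neg (show a < 0 by linarith)]; linarith)]; (try simp only [hfac]); field_simp; try ring
    have Mb : fspDeriv γ b * (γ*(1+γ)) = 0 := by
      rw [show fspDeriv γ b = 0 from fspDeriv_of_large hγ (by rw [abs_of_neg (show b < 0 by linarith)]; linarith)]; (try simp only [hfac]); field_simp; try ring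
    rw [Ma, Mb]
    nlinarith [sq_nonneg (b-a), hγ.le, mul_nonneg (sub_nonneg.mpr hab) hγ.le,
      sq_nonneg (a+1), sq_nonneg (a-1), sq_nonneg (b+1), sq_nonneg (b-1)]
  · have Ma : fspDeriv γ a * (γ*(1+γ)) = 0 := by
      rw [show fspDeriv γ a = 0 from fspDeriv_of_large hγ (by rw [abs_of_neg (show a < 0 by linarith)]; linarith)]; (try simp only [hfac]); field_simp; try ring
    have Mb : fspDeriv γ b * (γ*(1+γ)) = -(2*(-b-γ-1)) := by
      rw [show fspDeriv γ b = -(2*(-b-γ-1)/(γ^2+γ)) from fspDeriv_of_mid_neg hγ (by linarith) (by linarith)]; (try simp only [hfac]); field_simp; try ring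
    rw [Ma, Mb]
    nlinarith [sq_nonneg (b-a), hγ.le, mul_nonneg (sub_nonneg.mpr hab) hγ.le,
      sq_nonneg (a+1), sq_nonneg (a-1), sq_nonneg (b+1), sq_nonneg (b-1)]
  · have Ma : fspDeriv γ a * (γ*(1+γ)) = 0 := by
      rw [show fspDeriv γ a = 0 from fspDeriv_of_large hγ (by rw [abs_of_neg (show a < 0 by linarith)]; linarith)]; (try simp only [hfac]); field_simp; try ring
    have Mb : fspDeriv γ b * (γ*(1+γ)) = -2*b*γ := by
      rw [show fspDeriv γ b = -2*b/(1+γ) from fspDeriv_of_abs_le (abs_le.mpr ⟨by linarith, by linarith⟩)]; (try simp only [hfac]); field_simp; try ring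
    rw [Ma, Mb]
    nlinarith [sq_nonneg (b-a), hγ.le, mul_nonneg (sub_nonneg.mpr hab) hγ.le,
      sq_nonneg (a+1), sq_nonneg (a-1), sq_nonneg (b+1), sq_nonneg (b-1)]
  · have Ma : fspDeriv γ a * (γ*(1+γ)) = 0 := by
      rw [show fspDeriv γ a = 0 from fspDeriv_of_large hγ (by rw [abs_of_neg (show a < 0 by linarith)]; linarith)]; (try simp only [hfac]); field_simp; try ring
    have Mb : fspDeriv γ b * (γ*(1+γ)) = 2*(b-γ-1) := by
      rw [show fspDeriv γ b = 2*(b-γ-1)/(γ^2+γ) from fspDeriv_of_mid_pos hγ (by linarith) (by linarith)]; (try simp only [hfac]); field_simp; try ring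
    rw [Ma, Mb]
    nlinarith [sq_nonneg (b-a), hγ.le, mul_nonneg (sub_nonneg.mpr hab) hγ.le,
      sq_nonneg (a+1), sq_nonneg (a-1), sq_nonneg (b+1), sq_nonneg (b-1)]
  · have Ma : fspDeriv γ a * (γ*(1+γ)) = 0 := by
      rw [show fspDeriv γ a = 0 from fspDeriv_of_large hγ (by rw [abs_of_neg (show a < 0 by linarith)]; linarith)]; (try simp only [hfac]); field_simp; try ring
    have Mb : fspDeriv γ b * (γ*(1+γ)) = 0 := by
      rw [show fspDeriv γ b = 0 from fspDeriv_of_large hγ (by rw [abs_of_pos (show (0:ℝ) < b by linarith)]; linarith)]; (try simp only [hfac]); field_simp; try ring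
    rw [Ma, Mb]
    nlinarith [sq_nonneg (b-a), hγ.le, mul_nonneg (sub_nonneg.mpr hab) hγ.le,
      sq_nonneg (a+1), sq_nonneg (a-1), sq_nonneg (b+1), sq_nonneg (b-1)]
  · exfalso; linarith
  · have Ma : fspDeriv γ a * (γ*(1+γ)) = -(2*(-a-γ-1)) := by
      rw [show fspDeriv γ a = -(2*(-a-γ-1)/(γ^2+γ)) from fspDeriv_of_mid_neg hγ (by linarith) (by linarith)]; (try simp only [hfac]); field_simp; try ring
    have Mb : fspDeriv γ b * (γ*(1+γ)) = -(2*(-b-γ-1)) := by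
      rw [show fspDeriv γ b = -(2*(-b-γ-1)/(γ^2+γ)) from fspDeriv_of_mid_neg hγ (by linarith) (by linarith)]; (try simp only [hfac]); field_simp; try ring
    rw [Ma, Mb]
    nlinarith [sq_nonneg (b-a), hγ.le, mul_nonneg (sub_nonneg.mpr hab) hγ.le,
      sq_nonneg (a+1), sq_nonneg (a-1), sq_nonneg (b+1), sq_nonneg (b-1)]
  · have Ma : fspDeriv γ a * (γ*(1+γ)) = -(2*(-a-γ-1)) := by
      rw [show fspDeriv γ a = -(2*(-a-γ-1)/(γ^2+γ)) from fspDeriv_of_mid_neg hγ (by linarith) (by linarith)]; (try simp only [hfac]); field_simp; try ring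
    have Mb : fspDeriv γ b * (γ*(1+γ)) = -2*b*γ := by
      rw [show fspDeriv γ b = -2*b/(1+γ) from fspDeriv_of_abs_le (abs_le.mpr ⟨by linarith, by linarith⟩)]; (try simp only [hfac]); field_simp; try ring
    rw [Ma, Mb]
    nlinarith [sq_nonneg (b-a), hγ.le, mul_nonneg (sub_nonneg.mpr hab) hγ.le,
      sq_nonneg (a+1), sq_nonneg (a-1), sq_nonneg (b+1), sq_nonneg (b-1)]
  · have Ma : fspDeriv γ a * (γ*(1+γ)) = -(2*(-a-γ-1)) := by
      rw [show fspDeriv γ a = -(2*(-a-γ-1)/(γ^2+γ)) from fspDeriv_of_mid_neg hγ (by linarith) (by linarith)]; (try simp only [hfac]); field_simp; try ring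
    have Mb : fspDeriv γ b * (γ*(1+γ)) = 2*(b-γ-1) := by
      rw [show fspDeriv γ b = 2*(b-γ-1)/(γ^2+γ) from fspDeriv_of_mid_pos hγ (by linarith) (by linarith)]; (try simp only [hfac]); field_simp; try ring
    rw [Ma, Mb]
    nlinarith [sq_nonneg (b-a), hγ.le, mul_nonneg (sub_nonneg.mpr hab) hγ.le,
      sq_nonneg (a+1), sq_nonneg (a-1), sq_nonneg (b+1), sq_nonneg (b-1)]
  · have Ma : fspDeriv γ a * (γ*(1+γ)) = -(2*(-a-γ-1)) := by
      rw [show fspDeriv γ a = -(2*(-a-γ-1)/(γ^2+γ)) from fspDeriv_of_mid_neg hγ (by linarith) (by linarith)]; (try simp only [hfac]); field_simp; try ring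
    have Mb : fspDeriv γ b * (γ*(1+γ)) = 0 := by
      rw [show fspDeriv γ b = 0 from fspDeriv_of_large hγ (by rw [abs_of_pos (show (0:ℝ) < b by linarith)]; linarith)]; (try simp only [hfac]); field_simp; try ring
    rw [Ma, Mb]
    nlinarith [sq_nonneg (b-a), hγ.le, mul_nonneg (sub_nonneg.mpr hab) hγ.le,
      sq_nonneg (a+1), sq_nonneg (a-1), sq_nonneg (b+1), sq_nonneg (b-1)]
  · exfalso; linarith
  · exfalso; linarith
  · have Ma : fspDeriv γ a * (γ*(1+γ)) = -2*a*γ := by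
      rw [show fspDeriv γ a = -2*a/(1+γ) from fspDeriv_of_abs_le (abs_le.mpr ⟨by linarith, by linarith⟩)]; (try simp only [hfac]); field_simp; try ring
    have Mb : fspDeriv γ b * (γ*(1+γ)) = -2*b*γ := by
      rw [show fspDeriv γ b = -2*b/(1+γ) from fspDeriv_of_abs_le (abs_le.mpr ⟨by linarith, by linarith⟩)]; (try simp only [hfac]); field_simp; try ring
    rw [Ma, Mb]
    nlinarith [sq_nonneg (b-a), hγ.le, mul_nonneg (sub_nonneg.mpr hab) hγ.le,
      sq_nonneg (a+1), sq_nonneg (a-1), sq_nonneg (b+1), sq_nonneg (b-1)]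
  · have Ma : fspDeriv γ a * (γ*(1+γ)) = -2*a*γ := by
      rw [show fspDeriv γ a = -2*a/(1+γ) from fspDeriv_of_abs_le (abs_le.mpr ⟨by linarith, by linarith⟩)]; (try simp only [hfac]); field_simp; try ring
    have Mb : fspDeriv γ b * (γ*(1+γ)) = 2*(b-γ-1) := by
      rw [show fspDeriv γ b = 2*(b-γ-1)/(γ^2+γ) from fspDeriv_of_mid_pos hγ (by linarith) (by linarith)]; (try simp only [hfac]); field_simp; try ring
    rw [Ma, Mb]
    nlinarith [sq_nonneg (b-a), hγ.le, mul_nonneg (sub_nonneg.mpr hab) hγ.le,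
      sq_nonneg (a+1), sq_nonneg (a-1), sq_nonneg (b+1), sq_nonneg (b-1)]
  · have Ma : fspDeriv γ a * (γ*(1+γ)) = -2*a*γ := by
      rw [show fspDeriv γ a = -2*a/(1+γ) from fspDeriv_of_abs_le (abs_le.mpr ⟨by linarith, by linarith⟩)]; (try simp only [hfac]); field_simp; try ring
    have Mb : fspDeriv γ b * (γ*(1+γ)) = 0 := by
      rw [show fspDeriv γ b = 0 from fspDeriv_of_large hγ (by rw [abs_of_pos (show (0:ℝ) < b by linarith)]; linarith)]; (try simp only [hfac]); field_simp; try ring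
    rw [Ma, Mb]
    nlinarith [sq_nonneg (b-a), hγ.le, mul_nonneg (sub_nonneg.mpr hab) hγ.le,
      sq_nonneg (a+1), sq_nonneg (a-1), sq_nonneg (b+1), sq_nonneg (b-1)]
  · exfalso; linarith
  · exfalso; linarith
  · exfalso; linarith
  · have Ma : fspDeriv γ a * (γ*(1+γ)) = 2*(a-γ-1) := by
      rw [show fspDeriv γ a = 2*(a-γ-1)/(γ^2+γ) from fspDeriv_of_mid_pos hγ (by linarith) (by linarith)]; (try simp only [hfac]); field_simp; try ring
    have Mb : fspDeriv γ b * (γ*(1+γ)) = 2*(b-γ-1) := by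
      rw [show fspDeriv γ b = 2*(b-γ-1)/(γ^2+γ) from fspDeriv_of_mid_pos hγ (by linarith) (by linarith)]; (try simp only [hfac]); field_simp; try ring
    rw [Ma, Mb]
    nlinarith [sq_nonneg (b-a), hγ.le, mul_nonneg (sub_nonneg.mpr hab) hγ.le,
      sq_nonneg (a+1), sq_nonneg (a-1), sq_nonneg (b+1), sq_nonneg (b-1)]
  · have Ma : fspDeriv γ a * (γ*(1+γ)) = 2*(a-γ-1) := by
      rw [show fspDeriv γ a = 2*(a-γ-1)/(γ^2+γ) from fspDeriv_of_mid_pos hγ (by linarith) (by linarith)]; (try simp only [hfac]); field_simp; try ring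
    have Mb : fspDeriv γ b * (γ*(1+γ)) = 0 := by
      rw [show fspDeriv γ b = 0 from fspDeriv_of_large hγ (by rw [abs_of_pos (show (0:ℝ) < b by linarith)]; linarith)]; (try simp only [hfac]); field_simp; try ring
    rw [Ma, Mb]
    nlinarith [sq_nonneg (b-a), hγ.le, mul_nonneg (sub_nonneg.mpr hab) hγ.le,
      sq_nonneg (a+1), sq_nonneg (a-1), sq_nonneg (b+1), sq_nonneg (b-1)]
  · exfalso; linarith
  · exfalso; linarith
  · exfalso; linarith
  · exfalso; linarith
  · have Ma : fspDeriv γ a * (γ*(1+γ)) = 0 := by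
      rw [show fspDeriv γ a = 0 from fspDeriv_of_large hγ (by rw [abs_of_pos (show (0:ℝ) < a by linarith)]; linarith)]; (try simp only [hfac]); field_simp; try ring
    have Mb : fspDeriv γ b * (γ*(1+γ)) = 0 := by
      rw [show fspDeriv γ b = 0 from fspDeriv_of_large hγ (by rw [abs_of_pos (show (0:ℝ) < b by linarith)]; linarith)]; (try simp only [hfac]); field_simp; try ring
    rw [Ma, Mb]
    nlinarith [sq_nonneg (b-a), hγ.le, mul_nonneg (sub_nonneg.mpr hab) hγ.le,
      sq_nonneg (a+1), sq_nonneg (a-1), sq_nonneg (b+1), sq_nonneg (b-1)]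

lemma key1 (hγ : 0 < γ) (a b : ℝ) :
    (fspDeriv γ b - fspDeriv γ a) * (b - a) ≤ 2/(γ^2+γ) * (b - a)^2 := by
  rcases le_total a b with hab | hab
  · have h := fspDeriv_le hγ hab
    nlinarith [sub_nonneg.mpr hab]
  · have h := fspDeriv_le hγ hab
    nlinarith [sub_nonneg.mpr hab]

lemma key2 (hγ : 0 < γ) {a b : ℝ} (ha : |a| ≤ 1) (hb : |b| ≤ 1) :
    (fspDeriv γ b - fspDeriv γ a) * (b - a) = -(2/(1+γ)) * (b - a)^2 := by
  rw [fspDeriv_of_abs_le ha, fspDeriv_of_abs_le hb]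
  have : (1+γ) ≠ 0 := by positivity
  field_simp
  ring

lemma fsp_neg (u : ℝ) : fsp γ (-u) = fsp γ u := by
  simp [fsp, abs_neg, neg_sq]

lemma fspDeriv_neg (u : ℝ) : fspDeriv γ (-u) = -fspDeriv γ u := by
  simp only [fspDeriv, abs_neg, Real.sign_neg]
  split_ifs <;> ring

private lemma hasDerivAt_fsp_aux (hγ : 0 < γ) {u : ℝ} (hu : 0 ≤ u) :
    HasDerivAt (fsp γ) (fspDeriv γ u) u := by
  have hγ1 : (0:ℝ) < 1 + γ := by linarith
  have hγ2 : (0:ℝ) < γ^2 + γ := by positivity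
  -- quadratic pieces
  have q1 : ∀ v : ℝ, HasDerivAt (fun w : ℝ => 1 - w^2/(1+γ)) (-2*v/(1+γ)) v := by
    intro v
    have h := ((hasDerivAt_pow 2 v).div_const (1+γ)).const_sub 1
    refine h.congr_deriv ?_
    push_cast; ring
  have q2 : ∀ v : ℝ, HasDerivAt (fun w : ℝ => (w-γ-1)^2/(γ^2+γ)) (2*(v-γ-1)/(γ^2+γ)) v := by
    intro v
    have hid : HasDerivAt (fun w : ℝ => w - γ - 1) 1 v := by
      simpa using ((hasDerivAt_id v).sub_const γ).sub_const 1
    have h := (hid.pow 2).div_const (γ^2+γ)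
    refine h.congr_deriv ?_
    push_cast; ring
  rcases lt_or_eq_of_le hu with hu0 | hu0
  swap
  · -- u = 0
    subst hu0
    have ev : ∀ᶠ v in nhds (0:ℝ), fsp γ v = 1 - v^2/(1+γ) := by
      filter_upwards [eventually_abs_sub_lt 0 one_pos] with v hv
      rw [fsp_of_abs_le (by simpa using hv.le)]
    rw [show fspDeriv γ 0 = -2*0/(1+γ) from fspDeriv_of_abs_le (by norm_num)]
    exact (q1 0).congr_of_eventuallyEq ev
  rcases lt_or_ge u 1 with h1 | h1
  · -- 0 < u < 1
    have ev : ∀ᶠ v in nhds u, fsp γ v = 1 - v^2/(1+γ) := by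
      filter_upwards [eventually_lt_nhds h1, eventually_gt_nhds (show (-1:ℝ) < u by linarith)]
        with v hv1 hv2
      rw [fsp_of_abs_le (abs_le.mpr ⟨by linarith, by linarith⟩)]
    rw [fspDeriv_of_abs_le (abs_le.mpr ⟨by linarith, by linarith⟩)]
    exact (q1 u).congr_of_eventuallyEq ev
  rcases eq_or_lt_of_le h1 with h1e | h1s
  · -- u = 1
    subst h1e
    have d0 : fspDeriv γ (1:ℝ) = -2*1/(1+γ) := fspDeriv_of_abs_le (by norm_num)
    have left : HasDerivWithinAt (fsp γ) (-2*1/(1+γ)) (Set.Iic 1) 1 := by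
      refine ((q1 1).hasDerivWithinAt).congr_of_eventuallyEq ?_ ?_
      · filter_upwards [eventually_mem_nhdsWithin,
          eventually_nhdsWithin_of_eventually_nhds (eventually_gt_nhds (show (-1:ℝ) < 1 by norm_num))]
          with v hv1 hv2
        exact fsp_of_abs_le (abs_le.mpr ⟨by linarith, hv1⟩)
      · exact fsp_of_abs_le (by norm_num)
    have right : HasDerivWithinAt (fsp γ) (-2*1/(1+γ)) (Set.Ici 1) 1 := by
      have hq := ((q2 1).hasDerivWithinAt (s := Set.Ici 1))
      have hder : 2*((1:ℝ)-γ-1)/(γ^2+γ) = -2*1/(1+γ) := by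
        field_simp
        ring
      rw [hder] at hq
      refine hq.congr_of_eventuallyEq ?_ ?_
      · filter_upwards [eventually_mem_nhdsWithin,
          eventually_nhdsWithin_of_eventually_nhds (eventually_lt_nhds (show (1:ℝ) < 1+γ by linarith))]
          with v hv1 hv2
        rcases eq_or_lt_of_le (Set.mem_Ici.mp hv1) with hv | hv
        · rw [← hv, fsp_of_abs_le (by norm_num)]
          field_simp
          ring
        · rw [fsp_of_mid (by rw [abs_of_pos (by linarith)]; linarith)
            (by rw [abs_of_pos (by linarith)]; linarith), abs_of_pos (by linarith)]
      · rw [fsp_of_abs_le (by norm_num)]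
        field_simp
        ring
    rw [d0]
    have := left.union right
    rw [Set.Iic_union_Ici] at this
    exact hasDerivWithinAt_univ.mp this
  rcases lt_or_ge u (1+γ) with h2 | h2
  · -- 1 < u < 1+γ
    have ev : ∀ᶠ v in nhds u, fsp γ v = (v-γ-1)^2/(γ^2+γ) := by
      filter_upwards [eventually_lt_nhds h2, eventually_gt_nhds h1s] with v hv1 hv2
      rw [fsp_of_mid (by rw [abs_of_pos (by linarith)]; linarith)
        (by rw [abs_of_pos (by linarith)]; linarith), abs_of_pos (by linarith)]
    rw [fspDeriv_of_mid_pos hγ h1s (le_of_lt h2)]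
    exact (q2 u).congr_of_eventuallyEq ev
  rcases eq_or_lt_of_le h2 with h2e | h2s
  · -- u = 1 + γ
    subst h2e
    have d0 : fspDeriv γ (1+γ) = 0 := by
      rw [fspDeriv_of_mid_pos hγ (by linarith) le_rfl]
      field_simp
      ring
    have left : HasDerivWithinAt (fsp γ) 0 (Set.Iic (1+γ)) (1+γ) := by
      have hq := ((q2 (1+γ)).hasDerivWithinAt (s := Set.Iic (1+γ)))
      have hder : 2*((1+γ)-γ-1)/(γ^2+γ) = (0:ℝ) := by
        field_simp
        ring
      rw [hder] at hq
      refine hq.congr_of_eventuallyEq ?_ ?_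
      · filter_upwards [eventually_mem_nhdsWithin,
          eventually_nhdsWithin_of_eventually_nhds (eventually_gt_nhds (show (1:ℝ) < 1+γ by linarith))]
          with v hv1 hv2
        rw [fsp_of_mid (by rw [abs_of_pos (by linarith)]; linarith)
          (by rw [abs_of_pos (by linarith)]; exact hv1), abs_of_pos (by linarith)]
      · rw [fsp_of_mid (by rw [abs_of_pos (by linarith)]; linarith)
          (by rw [abs_of_pos (by linarith)]), abs_of_pos (by linarith)]
    have right : HasDerivWithinAt (fsp γ) 0 (Set.Ici (1+γ)) (1+γ) := by
      have hq : HasDerivWithinAt (fun _ : ℝ => (0:ℝ)) 0 (Set.Ici (1+γ)) (1+γ) :=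
        (hasDerivAt_const _ _).hasDerivWithinAt
      refine hq.congr_of_eventuallyEq ?_ ?_
      · filter_upwards [eventually_mem_nhdsWithin] with v hv1
        rcases eq_or_lt_of_le (Set.mem_Ici.mp hv1) with hv | hv
        · rw [← hv, fsp_of_mid (by rw [abs_of_pos (by linarith)]; linarith)
            (by rw [abs_of_pos (by linarith)]), abs_of_pos (by linarith)]
          field_simp
          ring
        · rw [fsp_of_large hγ (by rw [abs_of_pos (by linarith)]; push_neg; linarith)]
      · rw [fsp_of_mid (by rw [abs_of_pos (by linarith)]; linarith)
          (by rw [abs_of_pos (by linarith)]), abs_of_pos (by linarith)]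
        field_simp
        ring
    rw [d0]
    have := left.union right
    rw [Set.Iic_union_Ici] at this
    exact hasDerivWithinAt_univ.mp this
  · -- u > 1 + γ
    have ev : ∀ᶠ v in nhds u, fsp γ v = 0 := by
      filter_upwards [eventually_gt_nhds h2s] with v hv
      rw [fsp_of_large hγ (by rw [abs_of_pos (by linarith)]; push_neg; linarith)]
    rw [fspDeriv_of_large hγ (by rw [abs_of_pos (by linarith)]; linarith)]
    exact (hasDerivAt_const u (0:ℝ)).congr_of_eventuallyEq ev

lemma hasDerivAt_fsp (hγ : 0 < γ) (u : ℝ) : HasDerivAt (fsp γ) (fspDeriv γ u) u := by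
  rcases le_or_gt 0 u with hu | hu
  · exact hasDerivAt_fsp_aux hγ hu
  · have h := (hasDerivAt_fsp_aux hγ (show 0 ≤ -u by linarith)).comp u (hasDerivAt_neg u)
    have heq : (fsp γ) ∘ (fun v => -v) = fsp γ := by
      funext v; exact fsp_neg v
    rw [heq] at h
    refine h.congr_deriv ?_
    rw [fspDeriv_neg]
    ring

open Finset

variable {n m : ℕ}

/-- A null vector supported on ≤ n coordinates is zero (URP). -/
lemma null_support (hnm : n < m) {A : Matrix (Fin n) (Fin m) ℝ} (hURP : URP A)
    {v : Fin m → ℝ} (hv : A.mulVec v = 0) {J : Finset (Fin m)}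
    (hJ : ∀ i ∉ J, v i = 0) (hcard : J.card ≤ n) : v = 0 := by
  obtain ⟨J', hsub, _, hJ'card⟩ := Finset.exists_subsuperset_card_eq
    (Finset.subset_univ J) hcard (by simpa using hnm.le)
  set e := J'.orderIsoOfFin hJ'card with he
  set g : Fin n → Fin m := fun i => (e i : Fin m) with hg
  have hginj : Function.Injective g := by
    intro a b hab
    exact e.injective (Subtype.ext hab)
  have hunit := hURP g hginj
  have hvJ' : ∀ i ∉ J', v i = 0 := fun i hi => hJ i (fun hiJ => hi (hsub hiJ))
  have hmv : (A.submatrix id g).mulVec (v ∘ g) = 0 := by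
    funext j
    have : (A.submatrix id g).mulVec (v ∘ g) j = ∑ i : Fin n, A j (g i) * v (g i) := by
      simp [Matrix.mulVec, Matrix.submatrix, dotProduct, Function.comp]
    rw [this]
    have hsum : ∑ i : Fin n, A j (g i) * v (g i) = ∑ i ∈ J', A j i * v i := by
      rw [← Finset.sum_coe_sort J' (fun i => A j i * v i)]
      exact Fintype.sum_equiv e.toEquiv _ _ (fun i => rfl)
    rw [hsum]
    have : ∑ i ∈ J', A j i * v i = ∑ i : Fin m, A j i * v i := by
      apply Finset.sum_subset (Finset.subset_univ J')
      intro i _ hi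
      rw [hvJ' i hi, mul_zero]
    rw [this]
    have := congrFun hv j
    simpa [Matrix.mulVec, dotProduct] using this
  have hinj : Function.Injective (A.submatrix id g).mulVec := by
    rw [Matrix.mulVec_injective_iff_isUnit]
    exact hunit
  have hvg : v ∘ g = 0 := by
    apply hinj
    rw [hmv, Matrix.mulVec_zero]
  funext i
  by_cases hi : i ∈ J'
  · have := congrFun hvg (e.symm ⟨i, hi⟩)
    simp only [Function.comp, hg] at this
    rw [show ((e (e.symm ⟨i, hi⟩)) : Fin m) = i by rw [e.apply_symm_apply]] at this
    exact this
  · exact hvJ' i hi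

/-- The γ_A(n0) inequality for null-space vectors. -/
lemma gamma_bound (hnm : n < m) {A : Matrix (Fin n) (Fin m) ℝ} (hURP : URP A)
    {n0 : ℕ} (hn0 : n0 ≤ n) {γ : ℝ} (hγ : γ = gammaA A n0)
    (hbdd : BddAbove (gammaSet A n0)) {I : Finset (Fin m)} (hI : I.card ≤ n0)
    {v : Fin m → ℝ} (hv : A.mulVec v = 0) :
    ∑ i ∈ I, (v i)^2 ≤ γ * ∑ i ∈ Iᶜ, (v i)^2 := by
  by_cases hv0 : v = 0
  · simp [hv0]
  have hD : 0 < ∑ i ∈ Iᶜ, (v i)^2 := by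
    rcases (Finset.sum_nonneg (fun i _ => sq_nonneg (v i))).lt_or_eq with h | h
    · exact h
    exfalso
    apply hv0
    refine null_support hnm hURP hv (J := I) ?_ (hI.trans hn0)
    intro i hi
    have := (Finset.sum_eq_zero_iff_of_nonneg (fun i _ => sq_nonneg (v i))).mp h.symm i
      (by simpa using hi)
    exact pow_eq_zero_iff (by norm_num) |>.mp this
  have hmem : (∑ i ∈ I, (v i)^2) / (∑ i ∈ Iᶜ, (v i)^2) ∈ gammaSet A n0 :=
    ⟨I, v, hI, hv, hv0, rfl⟩
  have hle : (∑ i ∈ I, (v i)^2) / (∑ i ∈ Iᶜ, (v i)^2) ≤ γ := by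
    rw [hγ]
    exact le_csSup hbdd hmem
  rw [div_le_iff₀ hD] at hle
  linarith [hle]

variable {γ σ : ℝ}

/-- F ≤ m. -/
lemma Fsp_le (hγ : 0 < γ) (s : Fin m → ℝ) : Fsp γ σ s ≤ m := by
  calc Fsp γ σ s ≤ ∑ _i : Fin m, (1:ℝ) := Finset.sum_le_sum (fun i _ => fsp_le_one hγ _)
  _ = m := by simp

/-- F(s) ≥ m − ‖s‖₀. -/
lemma Fsp_ge_l0 (hγ : 0 < γ) (hσ : 0 < σ) (s : Fin m → ℝ) :
    (m : ℝ) - l0 s ≤ Fsp γ σ s := by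
  have key : (m:ℝ) - Fsp γ σ s ≤ l0 s := by
    have h1 : (m:ℝ) - Fsp γ σ s = ∑ i : Fin m, (1 - fsp γ (s i / σ)) := by
      rw [Finset.sum_sub_distrib]
      simp [Fsp]
    rw [h1]
    have h2 : ∑ i : Fin m, (1 - fsp γ (s i / σ))
        = ∑ i ∈ univ.filter (fun i => s i ≠ 0), (1 - fsp γ (s i / σ)) := by
      symm
      apply Finset.sum_subset (Finset.filter_subset _ _)
      intro i _ hi
      simp only [Finset.mem_filter, Finset.mem_univ, true_and, not_not] at hi
      rw [hi]
      simp [fsp_zero hγ]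
    rw [h2]
    calc ∑ i ∈ univ.filter (fun i => s i ≠ 0), (1 - fsp γ (s i / σ))
        ≤ ∑ _i ∈ univ.filter (fun i => s i ≠ 0), (1:ℝ) :=
          Finset.sum_le_sum (fun i _ => by linarith [fsp_nonneg hγ (s i / σ)])
      _ = l0 s := by simp [l0]
  linarith

/-- Counting coordinates exceeding σ. -/
lemma count_gt_sigma (hγ : 0 < γ) (hσ : 0 < σ) {s : Fin m → ℝ} {c : ℝ}
    (h : (m:ℝ) - c ≤ Fsp γ σ s) :
    ((univ.filter (fun i => σ < |s i|)).card : ℝ) ≤ (1+γ) * c := by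
  have hsum : ∑ i : Fin m, (1 - fsp γ (s i / σ)) ≤ c := by
    have h1 : ∑ i : Fin m, (1 - fsp γ (s i / σ)) = (m:ℝ) - Fsp γ σ s := by
      rw [Finset.sum_sub_distrib]
      simp [Fsp]
    rw [h1]
    linarith
  have hterm : ∀ i ∈ univ.filter (fun i => σ < |s i|), 1/(1+γ) ≤ 1 - fsp γ (s i / σ) := by
    intro i hi
    simp only [Finset.mem_filter] at hi
    have habs : 1 < |s i / σ| := by
      rw [abs_div, abs_of_pos hσ, lt_div_iff₀ hσ]
      linarith [hi.2]
    have := fsp_le_of_one_lt hγ habs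
    have hx : γ/(1+γ) + 1/(1+γ) = 1 := by field_simp; ring
    linarith
  have hpos : ∀ i ∈ (univ.filter (fun i => σ < |s i|))ᶜ, (0:ℝ) ≤ 1 - fsp γ (s i / σ) :=
    fun i _ => by linarith [fsp_le_one hγ (s i / σ)]
  have hlow : ((univ.filter (fun i => σ < |s i|)).card : ℝ) * (1/(1+γ))
      ≤ ∑ i ∈ univ.filter (fun i => σ < |s i|), (1 - fsp γ (s i / σ)) := by
    calc ((univ.filter (fun i => σ < |s i|)).card : ℝ) * (1/(1+γ))
        = ∑ _i ∈ univ.filter (fun i => σ < |s i|), (1/(1+γ)) := by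
          rw [Finset.sum_const, nsmul_eq_mul]
      _ ≤ _ := Finset.sum_le_sum hterm
  have hsplit : ∑ i ∈ univ.filter (fun i => σ < |s i|), (1 - fsp γ (s i / σ))
      ≤ ∑ i : Fin m, (1 - fsp γ (s i / σ)) := by
    apply Finset.sum_le_sum_of_subset_of_nonneg (Finset.subset_univ _)
    intro i _ hi
    exact hpos i (by simpa using hi)
  have hγ1 : (0:ℝ) < 1 + γ := by linarith
  have : ((univ.filter (fun i => σ < |s i|)).card : ℝ) * (1/(1+γ)) ≤ c := by linarith
  calc ((univ.filter (fun i => σ < |s i|)).card : ℝ)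
      = (((univ.filter (fun i => σ < |s i|)).card : ℝ) * (1/(1+γ))) * (1+γ) := by
        field_simp
    _ ≤ c * (1+γ) := by
        apply mul_le_mul_of_nonneg_right this hγ1.le
    _ = (1+γ) * c := by ring

/-- Counting coordinates exceeding (1+γ)σ. -/
lemma count_gt_big (hγ : 0 < γ) (hσ : 0 < σ) {s : Fin m → ℝ} {c : ℝ}
    (h : (m:ℝ) - c ≤ Fsp γ σ s) :
    ((univ.filter (fun i => (1+γ)*σ < |s i|)).card : ℝ) ≤ c := by
  have hsum : ∑ i : Fin m, (1 - fsp γ (s i / σ)) ≤ c := by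
    have h1 : ∑ i : Fin m, (1 - fsp γ (s i / σ)) = (m:ℝ) - Fsp γ σ s := by
      rw [Finset.sum_sub_distrib]
      simp [Fsp]
    rw [h1]
    linarith
  have hterm : ∀ i ∈ univ.filter (fun i => (1+γ)*σ < |s i|), (1:ℝ) ≤ 1 - fsp γ (s i / σ) := by
    intro i hi
    simp only [Finset.mem_filter] at hi
    have habs : ¬ |s i / σ| ≤ 1 + γ := by
      rw [abs_div, abs_of_pos hσ]
      push_neg
      rw [lt_div_iff₀ hσ]
      linarith [hi.2]
    rw [fsp_of_large hγ habs]
    norm_num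
  have hpos : ∀ i, (0:ℝ) ≤ 1 - fsp γ (s i / σ) :=
    fun i => by linarith [fsp_le_one hγ (s i / σ)]
  have hlow : ((univ.filter (fun i => (1+γ)*σ < |s i|)).card : ℝ)
      ≤ ∑ i ∈ univ.filter (fun i => (1+γ)*σ < |s i|), (1 - fsp γ (s i / σ)) := by
    calc ((univ.filter (fun i => (1+γ)*σ < |s i|)).card : ℝ)
        = ∑ _i ∈ univ.filter (fun i => (1+γ)*σ < |s i|), (1:ℝ) := by simp
      _ ≤ _ := Finset.sum_le_sum hterm
  have hsplit : ∑ i ∈ univ.filter (fun i => (1+γ)*σ < |s i|), (1 - fsp γ (s i / σ))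
      ≤ ∑ i : Fin m, (1 - fsp γ (s i / σ)) := by
    apply Finset.sum_le_sum_of_subset_of_nonneg (Finset.subset_univ _)
    intro i _ _
    exact hpos i
  linarith

open Finset

variable {m : ℕ} {γ σ : ℝ}

/-- Continuity of fsp. -/
lemma continuous_fsp (hγ : 0 < γ) : Continuous (fsp γ) := by
  rw [continuous_iff_continuousAt]
  intro u
  exact (hasDerivAt_fsp hγ u).continuousAt

/-- Continuity of Fsp. -/
lemma continuous_Fsp (hγ : 0 < γ) (hσ : 0 < σ) : Continuous (Fsp γ σ : (Fin m → ℝ) → ℝ) := by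
  apply continuous_finset_sum
  intro i _
  exact (continuous_fsp hγ).comp (by fun_prop)

/-- Chain rule: derivative of Fsp along a differentiable curve. -/
lemma hasDerivAt_Fsp_comp (hγ : 0 < γ) (hσ : 0 < σ) {α : ℝ → Fin m → ℝ} {v : Fin m → ℝ}
    {t : ℝ} (hα : HasDerivAt α v t) :
    HasDerivAt (fun t => Fsp γ σ (α t)) (∑ i, gradF γ σ (α t) i * v i) t := by
  have hcoord : ∀ i, HasDerivAt (fun t => α t i) (v i) t := by
    intro i
    exact (hasDerivAt_pi.mp hα) i
  have hterm : ∀ i, HasDerivAt (fun t => fsp γ (α t i / σ))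
      (gradF γ σ (α t) i * v i) t := by
    intro i
    have h1 : HasDerivAt (fun t => α t i / σ) (v i / σ) t := (hcoord i).div_const σ
    have h2 := (hasDerivAt_fsp hγ (α t i / σ)).comp t h1
    refine h2.congr_deriv ?_
    simp only [gradF]
    ring
  have := HasDerivAt.fun_sum (fun i (_ : i ∈ Finset.univ) => hterm i)
  simpa [Fsp] using this

open Finset

variable {n m : ℕ}

/-- Antitonicity of the directional derivative of Fsp along null-space segments. -/
lemma gderiv_antitone (hnm : n < m) {A : Matrix (Fin n) (Fin m) ℝ} (hURP : URP A)
    {n0 : ℕ} (hn0 : n0 ≤ n) {γ : ℝ} (hγpos : 0 < γ) (hγ : γ = gammaA A n0)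
    (hbdd : BddAbove (gammaSet A n0)) {σ : ℝ} (hσ : 0 < σ)
    {s z : Fin m → ℝ} (hsz : A.mulVec s = A.mulVec z)
    (hI : (univ.filter (fun i => σ < |s i| ∨ σ < |z i|)).card ≤ n0)
    {θ1 θ2 : ℝ} (h1 : 0 ≤ θ1) (h12 : θ1 ≤ θ2) (h2 : θ2 ≤ 1) :
    ∑ i, fspDeriv γ ((s i + θ2*(z i - s i))/σ) * (z i - s i) / σ ≤
    ∑ i, fspDeriv γ ((s i + θ1*(z i - s i))/σ) * (z i - s i) / σ := by
  rcases eq_or_lt_of_le h12 with he | hlt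
  · rw [he]
  set d : Fin m → ℝ := fun i => z i - s i with hd
  set a : Fin m → ℝ := fun i => (s i + θ1*(d i))/σ with ha
  set b : Fin m → ℝ := fun i => (s i + θ2*(d i))/σ with hb
  set c : ℝ := (θ2 - θ1)/σ with hc
  have hcpos : 0 < c := div_pos (by linarith) hσ
  have hba : ∀ i, b i - a i = c * d i := by
    intro i
    simp only [ha, hb, hc]
    field_simp
    ring
  set I : Finset (Fin m) := univ.filter (fun i => σ < |s i| ∨ σ < |z i|) with hIdef
  show ∑ i, fspDeriv γ (b i) * d i / σ ≤ ∑ i, fspDeriv γ (a i) * d i / σ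
  -- null-space direction
  have hdnull : A.mulVec d = 0 := by
    have : d = z - s := by funext i; simp [hd]
    rw [this, Matrix.mulVec_sub, hsz, sub_self]
  have hgb := gamma_bound hnm hURP hn0 hγ hbdd hI hdnull
  -- pointwise bounds
  have hL : (0:ℝ) < 2/(γ^2+γ) := by positivity
  have hsmall : ∀ i ∈ Iᶜ, (fspDeriv γ (b i) - fspDeriv γ (a i)) * (b i - a i)
      = -(2/(1+γ)) * (b i - a i)^2 := by
    intro i hi
    simp only [hIdef, Finset.mem_compl, Finset.mem_filter, Finset.mem_univ, true_and,
      not_or, not_lt] at hi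
    obtain ⟨hs1, hz1⟩ := hi
    have haux : ∀ θ : ℝ, 0 ≤ θ → θ ≤ 1 → |(s i + θ*(d i))/σ| ≤ 1 := by
      intro θ hθ0 hθ1
      rw [abs_div, abs_of_pos hσ, div_le_one hσ]
      have heq : s i + θ*(d i) = (1-θ) * s i + θ * z i := by simp [hd]; ring
      rw [heq]
      calc |(1-θ) * s i + θ * z i| ≤ |(1-θ) * s i| + |θ * z i| := abs_add_le _ _
        _ = (1-θ) * |s i| + θ * |z i| := by
            rw [abs_mul, abs_mul, abs_of_nonneg (by linarith : (0:ℝ) ≤ 1-θ), abs_of_nonneg hθ0]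
        _ ≤ (1-θ) * σ + θ * σ := by
            apply add_le_add
            · exact mul_le_mul_of_nonneg_left hs1 (by linarith)
            · exact mul_le_mul_of_nonneg_left hz1 hθ0
        _ = σ := by ring
    exact key2 hγpos (haux θ1 h1 (by linarith)) (haux θ2 (by linarith) h2)
  have hbig : ∀ i ∈ I, (fspDeriv γ (b i) - fspDeriv γ (a i)) * (b i - a i)
      ≤ 2/(γ^2+γ) * (b i - a i)^2 := fun i _ => key1 hγpos _ _
  -- the summed estimate
  have hS : ∑ i, (fspDeriv γ (b i) - fspDeriv γ (a i)) * (b i - a i) ≤ 0 := by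
    rw [← Finset.sum_add_sum_compl I]
    have e1 : ∑ i ∈ I, (fspDeriv γ (b i) - fspDeriv γ (a i)) * (b i - a i)
        ≤ 2/(γ^2+γ) * ∑ i ∈ I, (d i)^2 * c^2 := by
      rw [Finset.mul_sum]
      apply Finset.sum_le_sum
      intro i hi
      calc (fspDeriv γ (b i) - fspDeriv γ (a i)) * (b i - a i)
          ≤ 2/(γ^2+γ) * (b i - a i)^2 := hbig i hi
        _ = 2/(γ^2+γ) * ((d i)^2 * c^2) := by rw [hba i]; ring
    have e2 : ∑ i ∈ Iᶜ, (fspDeriv γ (b i) - fspDeriv γ (a i)) * (b i - a i)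
        = -(2/(1+γ)) * ∑ i ∈ Iᶜ, (d i)^2 * c^2 := by
      rw [Finset.mul_sum]
      apply Finset.sum_congr rfl
      intro i hi
      rw [hsmall i hi, hba i]
      ring
    have e3 : ∑ i ∈ I, (d i)^2 * c^2 ≤ γ * ∑ i ∈ Iᶜ, (d i)^2 * c^2 := by
      have := mul_le_mul_of_nonneg_right hgb (sq_nonneg c)
      calc ∑ i ∈ I, (d i)^2 * c^2 = (∑ i ∈ I, (d i)^2) * c^2 := by
            rw [Finset.sum_mul]
        _ ≤ (γ * ∑ i ∈ Iᶜ, (d i)^2) * c^2 := this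
        _ = γ * ∑ i ∈ Iᶜ, (d i)^2 * c^2 := by rw [mul_assoc, Finset.sum_mul]
    have hfact : 2/(γ^2+γ) * γ = 2/(1+γ) := by
      have h1 : γ^2+γ = γ*(1+γ) := by ring
      rw [h1]
      field_simp
    have hDpos : (0:ℝ) ≤ ∑ i ∈ Iᶜ, (d i)^2 * c^2 :=
      Finset.sum_nonneg (fun i _ => by positivity)
    nlinarith [e1, e2, e3, hL.le]
  -- conclude
  have hT : (∑ i, (fspDeriv γ (b i) - fspDeriv γ (a i)) * (d i) / σ) * (θ2 - θ1) ≤ 0 := by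
    have : (∑ i, (fspDeriv γ (b i) - fspDeriv γ (a i)) * (d i) / σ) * (θ2 - θ1)
        = ∑ i, (fspDeriv γ (b i) - fspDeriv γ (a i)) * (b i - a i) := by
      rw [Finset.sum_mul]
      apply Finset.sum_congr rfl
      intro i _
      rw [hba i, hc]
      field_simp
    rw [this]
    exact hS
  have hT2 : ∑ i, (fspDeriv γ (b i) - fspDeriv γ (a i)) * (d i) / σ ≤ 0 := by
    by_contra hcon
    push_neg at hcon
    nlinarith [hT]
  have : ∑ i, (fspDeriv γ (b i) - fspDeriv γ (a i)) * (d i) / σ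
      = ∑ i, fspDeriv γ (b i) * (d i) / σ - ∑ i, fspDeriv γ (a i) * (d i) / σ := by
    rw [← Finset.sum_sub_distrib]
    apply Finset.sum_congr rfl
    intro i _
    ring
  rw [this] at hT2
  linarith [hT2]

/-- The concavity gradient inequality on the high-F region. -/
lemma grad_ineq (hnm : n < m) {A : Matrix (Fin n) (Fin m) ℝ} (hURP : URP A)
    {n0 : ℕ} (hn0 : n0 ≤ n) {γ : ℝ} (hγpos : 0 < γ) (hγ : γ = gammaA A n0)
    (hbdd : BddAbove (gammaSet A n0)) {σ : ℝ} (hσ : 0 < σ)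
    {s z : Fin m → ℝ} (hsz : A.mulVec s = A.mulVec z)
    (hcs : 2 * (univ.filter (fun i => σ < |s i|)).card ≤ n0)
    (hcz : 2 * (univ.filter (fun i => σ < |z i|)).card ≤ n0) :
    Fsp γ σ z - Fsp γ σ s ≤ ∑ i, gradF γ σ s i * (z i - s i) := by
  rcases eq_or_ne z s with rfl | hne
  · simp
  have hI : (univ.filter (fun i => σ < |s i| ∨ σ < |z i|)).card ≤ n0 := by
    have hsub : univ.filter (fun i => σ < |s i| ∨ σ < |z i|) ⊆
        univ.filter (fun i => σ < |s i|) ∪ univ.filter (fun i => σ < |z i|) := by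
      intro i hi
      simp only [Finset.mem_filter, Finset.mem_univ, true_and] at hi
      rcases hi with h | h
      · exact Finset.mem_union_left _ (by simp [h])
      · exact Finset.mem_union_right _ (by simp [h])
    calc (univ.filter (fun i => σ < |s i| ∨ σ < |z i|)).card
        ≤ (univ.filter (fun i => σ < |s i|) ∪ univ.filter (fun i => σ < |z i|)).card :=
          Finset.card_le_card hsub
      _ ≤ (univ.filter (fun i => σ < |s i|)).card + (univ.filter (fun i => σ < |z i|)).card :=
          Finset.card_union_le _ _
      _ ≤ n0 := by omega
  set d : Fin m → ℝ := z - s with hd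
  have hdi : ∀ i, d i = z i - s i := fun i => rfl
  set g : ℝ → ℝ := fun θ => Fsp γ σ (s + θ • d) with hgdef
  have hcurve : ∀ θ : ℝ, HasDerivAt (fun θ : ℝ => s + θ • d) d θ := by
    intro θ
    apply hasDerivAt_pi.mpr
    intro i
    have h0 : HasDerivAt (fun θ : ℝ => s i + θ * d i) (d i) θ := by
      simpa [mul_comm] using ((hasDerivAt_id θ).const_mul (d i)).const_add (s i)
    have he : (fun θ : ℝ => (s + θ • d) i) = (fun θ : ℝ => s i + θ * d i) := by
      funext θ; simp
    rw [he]
    exact h0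
  have hg : ∀ θ : ℝ, HasDerivAt g (∑ i, gradF γ σ (s + θ • d) i * d i) θ := by
    intro θ
    exact hasDerivAt_Fsp_comp hγpos hσ (hcurve θ)
  set g' : ℝ → ℝ := fun θ => ∑ i, gradF γ σ (s + θ • d) i * d i with hg'def
  obtain ⟨ξ, hξmem, hξ⟩ := exists_hasDerivAt_eq_slope g g' one_pos
    (fun x _ => (hg x).continuousAt.continuousWithinAt) (fun x _ => hg x)
  have hanti : g' ξ ≤ g' 0 := by
    have key := gderiv_antitone hnm hURP hn0 hγpos hγ hbdd hσ hsz hI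
      (le_refl (0:ℝ)) (le_of_lt hξmem.1) (le_of_lt hξmem.2)
    have e : ∀ θ : ℝ, g' θ = ∑ i, fspDeriv γ ((s i + θ*(z i - s i))/σ) * (z i - s i) / σ := by
      intro θ
      apply Finset.sum_congr rfl
      intro i _
      simp only [gradF, Pi.add_apply, Pi.smul_apply, smul_eq_mul, hdi]
      ring
    rw [e ξ, e 0]
    exact key
  have hg1 : g 1 = Fsp γ σ z := by
    simp only [hgdef, one_smul]
    congr 1
    funext i
    simp [hdi]
  have hg0 : g 0 = Fsp γ σ s := by
    simp only [hgdef, zero_smul, add_zero]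
  have hslope : g' ξ = g 1 - g 0 := by
    rw [hξ]; simp
  have hg'0 : g' 0 = ∑ i, gradF γ σ s i * (z i - s i) := by
    apply Finset.sum_congr rfl
    intro i _
    simp [hdi]
  rw [hg1, hg0] at hslope
  rw [hg'0] at hanti
  linarith [hanti, hslope.symm.le]

open Finset

/-- Monotone on Ici 0 from nonneg derivative. -/
lemma mono_on_Ici {f f' : ℝ → ℝ} (hd : ∀ t ∈ Set.Ici (0:ℝ), HasDerivAt f (f' t) t)
    (h0 : ∀ t ∈ Set.Ici (0:ℝ), 0 ≤ f' t) : MonotoneOn f (Set.Ici 0) := by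
  apply monotoneOn_of_deriv_nonneg (convex_Ici 0)
  · intro t ht
    exact (hd t ht).continuousAt.continuousWithinAt
  · intro t ht
    rw [interior_Ici] at ht
    exact (hd t (Set.Ioi_subset_Ici_self ht)).differentiableAt.differentiableWithinAt
  · intro t ht
    rw [interior_Ici] at ht
    rw [(hd t (Set.Ioi_subset_Ici_self ht)).deriv]
    exact h0 t (Set.Ioi_subset_Ici_self ht)

/-- Antitone on Ici 0 from nonpos derivative. -/
lemma anti_on_Ici {f f' : ℝ → ℝ} (hd : ∀ t ∈ Set.Ici (0:ℝ), HasDerivAt f (f' t) t)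
    (h0 : ∀ t ∈ Set.Ici (0:ℝ), f' t ≤ 0) : AntitoneOn f (Set.Ici 0) := by
  apply antitoneOn_of_deriv_nonpos (convex_Ici 0)
  · intro t ht
    exact (hd t ht).continuousAt.continuousWithinAt
  · intro t ht
    rw [interior_Ici] at ht
    exact (hd t (Set.Ioi_subset_Ici_self ht)).differentiableAt.differentiableWithinAt
  · intro t ht
    rw [interior_Ici] at ht
    rw [(hd t (Set.Ioi_subset_Ici_self ht)).deriv]
    exact h0 t (Set.Ioi_subset_Ici_self ht)

/-- Constant on Ici 0 from zero derivative. -/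
lemma const_on_Ici {f f' : ℝ → ℝ} (hd : ∀ t ∈ Set.Ici (0:ℝ), HasDerivAt f (f' t) t)
    (h0 : ∀ t ∈ Set.Ici (0:ℝ), f' t = 0) : ∀ t ∈ Set.Ici (0:ℝ), f t = f 0 := by
  intro t ht
  have hm := mono_on_Ici hd (fun t ht => (h0 t ht).ge)
  have ha := anti_on_Ici hd (fun t ht => (h0 t ht).le)
  exact le_antisymm (ha (Set.self_mem_Ici) ht ht) (hm (Set.self_mem_Ici) ht ht)

set_option maxHeartbeats 1600000 in
/-- starting from any point of {As = x} with F_{γ,σ} ≥ m − n0/(2+2γ), the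
steepest-ascent trajectory (projected onto the null space of A) converges to a global
maximizer s* of F_{γ,σ} over {As = x}, with F_{γ,σ}(s*) ≥ m − k. -/
theorem stmt_8 {n m : ℕ} (hnm : n < m) (A : Matrix (Fin n) (Fin m) ℝ)
    (hURP : URP A) (n0 : ℕ) (hn1 : 1 ≤ n0) (hn0 : n0 ≤ n)
    (γ : ℝ) (hγ : γ = gammaA A n0) (hγpos : 0 < γ) (hbdd : BddAbove (gammaSet A n0))
    (σ : ℝ) (hσ : 0 < σ) (x : Fin n → ℝ)
    (s0 : Fin m → ℝ) (hs0x : A.mulVec s0 = x)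
    (k : ℕ) (hk : k = l0 s0) (hksp : (k : ℝ) ≤ n0 / (2 + 2 * γ))
    (P : (Fin m → ℝ) →ₗ[ℝ] (Fin m → ℝ))
    (hP1 : ∀ v, A.mulVec (P v) = 0)
    (hP2 : ∀ v, A.mulVec v = 0 → P v = v)
    (hP3 : ∀ v w : Fin m → ℝ, ∑ i, P v i * w i = ∑ i, v i * P w i)
    (shat : Fin m → ℝ) (hshatx : A.mulVec shat = x)
    (hFshat : (m : ℝ) - n0 / (2 + 2 * γ) ≤ Fsp γ σ shat)
    (α : ℝ → Fin m → ℝ) (hα0 : α 0 = shat)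
    (hαd : ∀ t : ℝ, 0 ≤ t → HasDerivAt α (P (gradF γ σ (α t))) t) :
    ∃ sstar : Fin m → ℝ,
      Filter.Tendsto α Filter.atTop (nhds sstar) ∧
      A.mulVec sstar = x ∧
      (∀ s : Fin m → ℝ, A.mulVec s = x → Fsp γ σ s ≤ Fsp γ σ sstar) ∧
      (m : ℝ) - k ≤ Fsp γ σ sstar := by
  have h2γ : (0:ℝ) < 2 + 2*γ := by linarith
  have hγ1 : (0:ℝ) < 1 + γ := by linarith
  set c : ℝ := (n0:ℝ) / (2 + 2*γ) with hc
  -- basic facts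
  have hFs0 : (m:ℝ) - k ≤ Fsp γ σ s0 := by
    have := Fsp_ge_l0 hγpos hσ s0
    rw [hk]
    exact this
  -- the region S
  set S : Set (Fin m → ℝ) := {s | A.mulVec s = x ∧ (m:ℝ) - c ≤ Fsp γ σ s} with hSdef
  have hs0S : s0 ∈ S := ⟨hs0x, by linarith⟩
  have hshatS : shat ∈ S := ⟨hshatx, hFshat⟩
  -- counting in S
  have hcount : ∀ s ∈ S, 2 * (univ.filter fun i => σ < |s i|).card ≤ n0 := by
    intro s hs
    have h := count_gt_sigma hγpos hσ hs.2
    have heq : (1+γ) * c = (n0:ℝ)/2 := by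
      rw [hc]
      field_simp
    have h2 : ((2 * (univ.filter fun i => σ < |s i|).card : ℕ) : ℝ) ≤ (n0:ℝ) := by
      push_cast
      rw [heq] at h
      linarith
    exact_mod_cast h2
  -- gradient inequality on S
  have hgradineq : ∀ s ∈ S, ∀ z ∈ S, Fsp γ σ z - Fsp γ σ s ≤
      ∑ i, gradF γ σ s i * (z i - s i) := by
    intro s hs z hz
    exact grad_ineq hnm hURP hn0 hγpos hγ hbdd hσ (hs.1.trans hz.1.symm)
      (hcount s hs) (hcount z hz)
  -- boundedness of S
  set B : ℝ := (m:ℝ) * ((1+γ)*σ)^2 with hB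
  set R : ℝ := Real.sqrt ((1+γ) * B) with hR
  have hRnn : 0 ≤ R := Real.sqrt_nonneg _
  have hbound : ∀ s ∈ S, ∀ i, |s i - s0 i| ≤ R := by
    intro s hs
    set J : Finset (Fin m) :=
      (univ.filter fun i => (1+γ)*σ < |s i|) ∪ (univ.filter fun i => s0 i ≠ 0) with hJdef
    have hcard1 : ((univ.filter fun i => (1+γ)*σ < |s i|).card : ℝ) ≤ c :=
      count_gt_big hγpos hσ hs.2
    have hcard2 : ((univ.filter fun i => s0 i ≠ 0).card : ℝ) = k := by
      rw [hk]; rfl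
    have hJcard : (J.card : ℝ) ≤ (n0:ℝ) := by
      have h1 := Finset.card_union_le (univ.filter fun i => (1+γ)*σ < |s i|)
        (univ.filter fun i => s0 i ≠ 0)
      have h2 : (J.card:ℝ) ≤ ((univ.filter fun i => (1+γ)*σ < |s i|).card:ℝ)
          + ((univ.filter fun i => s0 i ≠ 0).card : ℝ) := by exact_mod_cast h1
      have h3 : c + c ≤ (n0:ℝ) := by
        rw [hc, ← add_div, div_le_iff₀ h2γ]
        have : (0:ℝ) ≤ (n0:ℝ) := Nat.cast_nonneg n0
        nlinarith
      linarith [hksp, hcard2 ▸ h2]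
    have hJn0 : J.card ≤ n0 := by exact_mod_cast hJcard
    set d : Fin m → ℝ := fun i => s i - s0 i with hd
    have hdnull : A.mulVec d = 0 := by
      have h1 : d = s - s0 := rfl
      rw [h1, Matrix.mulVec_sub, hs.1, hs0x, sub_self]
    have hgb := gamma_bound hnm hURP hn0 hγ hbdd hJn0 hdnull
    have hJc : ∀ i ∈ Jᶜ, (d i)^2 ≤ ((1+γ)*σ)^2 := by
      intro i hi
      simp only [hJdef, Finset.mem_compl, Finset.mem_union, Finset.mem_filter, Finset.mem_univ,
        true_and, not_or, not_lt, not_not] at hi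
      obtain ⟨h1, h2⟩ := hi
      have h3 : d i = s i := by simp [hd, h2]
      rw [h3, ← sq_abs]
      exact pow_le_pow_left₀ (abs_nonneg _) h1 2
    have hsumc : ∑ i ∈ Jᶜ, (d i)^2 ≤ B := by
      have hcards : (Jᶜ.card:ℝ) ≤ (m:ℝ) := by
        have h5 : Jᶜ.card ≤ m := by simpa using Finset.card_le_univ (Jᶜ)
        exact_mod_cast h5
      calc ∑ i ∈ Jᶜ, (d i)^2 ≤ ∑ _i ∈ Jᶜ, ((1+γ)*σ)^2 := Finset.sum_le_sum hJc
        _ = (Jᶜ.card:ℝ) * ((1+γ)*σ)^2 := by rw [Finset.sum_const, nsmul_eq_mul]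
        _ ≤ (m:ℝ) * ((1+γ)*σ)^2 := mul_le_mul_of_nonneg_right hcards (sq_nonneg _)
        _ = B := hB.symm
    have htot : ∑ i, (d i)^2 ≤ (1+γ) * B := by
      rw [← Finset.sum_add_sum_compl J]
      nlinarith [hgb, hsumc, hγpos.le]
    intro i
    have h1 : (d i)^2 ≤ (1+γ)*B :=
      le_trans (Finset.single_le_sum (fun j _ => sq_nonneg (d j)) (Finset.mem_univ i)) htot
    have h2 : |d i| ≤ R := by
      rw [hR, ← Real.sqrt_sq_eq_abs]
      exact Real.sqrt_le_sqrt h1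
    exact h2
  -- compactness of S
  have hSclosed : IsClosed S := by
    have hmvcont : Continuous (fun s : Fin m → ℝ => A.mulVec s) := by
      have h := LinearMap.continuous_of_finiteDimensional (Matrix.mulVecLin A)
      have he : (fun s : Fin m → ℝ => A.mulVec s) = ⇑(Matrix.mulVecLin A) := by
        funext s
        rw [Matrix.mulVecLin_apply]
      rw [he]
      exact h
    have h1 : IsClosed {s : Fin m → ℝ | A.mulVec s = x} := isClosed_eq hmvcont continuous_const
    have h2 : IsClosed {s : Fin m → ℝ | (m:ℝ) - c ≤ Fsp γ σ s} :=
      isClosed_le continuous_const (continuous_Fsp hγpos hσ)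
    exact h1.inter h2
  have hScompact : IsCompact S := by
    apply Metric.isCompact_of_isClosed_isBounded hSclosed
    apply (Metric.isBounded_closedBall (x := s0) (r := R)).subset
    intro s hs
    rw [Metric.mem_closedBall, dist_pi_le_iff hRnn]
    intro i
    rw [Real.dist_eq]
    exact hbound s hs i
  -- maximizer over S
  obtain ⟨z, hzS, hzmax'⟩ := hScompact.exists_isMaxOn ⟨s0, hs0S⟩
    ((continuous_Fsp hγpos hσ).continuousOn)
  have hzmax : ∀ s ∈ S, Fsp γ σ s ≤ Fsp γ σ z := fun s hs => hzmax' hs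
  -- trajectory stays in S
  have hαx : ∀ t ∈ Set.Ici (0:ℝ), A.mulVec (α t) = x := by
    have hj : ∀ j, ∀ t ∈ Set.Ici (0:ℝ), A.mulVec (α t) j = A.mulVec (α 0) j := by
      intro j
      apply const_on_Ici (f' := fun _ => (0:ℝ))
      · intro t ht
        have hcoord := fun i => (hasDerivAt_pi.mp (hαd t ht)) i
        have hsum : HasDerivAt (fun t => ∑ i, A j i * α t i)
            (∑ i, A j i * P (gradF γ σ (α t)) i) t :=
          HasDerivAt.fun_sum (fun i _ => (hcoord i).const_mul (A j i))
        have hval : ∑ i, A j i * P (gradF γ σ (α t)) i = 0 := by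
          have h := congrFun (hP1 (gradF γ σ (α t))) j
          simpa [Matrix.mulVec, dotProduct] using h
        have heq : (fun t => A.mulVec (α t) j) = fun t => ∑ i, A j i * α t i := by
          funext t
          simp [Matrix.mulVec, dotProduct]
        rw [heq]
        exact hval ▸ hsum
      · intro t _
        rfl
    intro t ht
    funext j
    rw [hj j t ht, hα0]
    exact congrFun hshatx j
  set Φ : ℝ → ℝ := fun t => Fsp γ σ (α t) with hΦdef
  set Dt : ℝ → ℝ := fun t => ∑ i, gradF γ σ (α t) i * P (gradF γ σ (α t)) i with hDtdef
  have hΦd : ∀ t ∈ Set.Ici (0:ℝ), HasDerivAt Φ (Dt t) t := fun t ht =>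
    hasDerivAt_Fsp_comp hγpos hσ (hαd t ht)
  have hDt_eq : ∀ t, Dt t = ∑ i, (P (gradF γ σ (α t)) i)^2 := by
    intro t
    have h := hP3 (gradF γ σ (α t)) (P (gradF γ σ (α t)))
    rw [hP2 (P (gradF γ σ (α t))) (hP1 (gradF γ σ (α t)))] at h
    rw [hDtdef]
    simp only
    rw [← h]
    apply Finset.sum_congr rfl
    intro i _
    ring
  have hDtnn : ∀ t, 0 ≤ Dt t := by
    intro t
    rw [hDt_eq]
    exact Finset.sum_nonneg fun i _ => sq_nonneg _
  have hΦmono : MonotoneOn Φ (Set.Ici 0) := mono_on_Ici hΦd (fun t _ => hDtnn t)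
  have hαtS : ∀ t ∈ Set.Ici (0:ℝ), α t ∈ S := by
    intro t ht
    refine ⟨hαx t ht, ?_⟩
    have h1 : Φ 0 ≤ Φ t := hΦmono Set.self_mem_Ici ht ht
    have h2 : Φ 0 = Fsp γ σ shat := by rw [hΦdef]; simp [hα0]
    have : (m:ℝ) - c ≤ Φ 0 := by rw [h2]; exact hFshat
    calc (m:ℝ) - c ≤ Φ 0 := this
      _ ≤ Φ t := h1
  -- inner-product massage
  have hinner : ∀ t (q : Fin m → ℝ), A.mulVec q = 0 →
      ∑ i, gradF γ σ (α t) i * q i = ∑ i, P (gradF γ σ (α t)) i * q i := by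
    intro t q hq
    rw [hP3 (gradF γ σ (α t)) q, hP2 q hq]
  -- Fejér derivative
  have hfejer : ∀ z' : Fin m → ℝ, A.mulVec z' = x →
      ∀ t ∈ Set.Ici (0:ℝ), HasDerivAt (fun t => ∑ i, (α t i - z' i)^2)
        (2 * ∑ i, gradF γ σ (α t) i * (α t i - z' i)) t := by
    intro z' hz' t ht
    have hcoord := fun i => (hasDerivAt_pi.mp (hαd t ht)) i
    have hterm : ∀ i, HasDerivAt (fun t => (α t i - z' i)^2)
        (2 * (α t i - z' i) * P (gradF γ σ (α t)) i) t := by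
      intro i
      have h := ((hcoord i).sub_const (z' i)).pow 2
      refine h.congr_deriv ?_
      push_cast
      ring
    have hsum := HasDerivAt.fun_sum (fun i (_ : i ∈ Finset.univ) => hterm i)
    have hq : A.mulVec (fun i => α t i - z' i) = 0 := by
      have h1 : (fun i => α t i - z' i) = α t - z' := rfl
      rw [h1, Matrix.mulVec_sub, hαx t ht, hz', sub_self]
    have hv : ∑ i, 2 * (α t i - z' i) * P (gradF γ σ (α t)) i
        = 2 * ∑ i, gradF γ σ (α t) i * (α t i - z' i) := by
      have h2 := hinner t (fun i => α t i - z' i) hq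
      calc ∑ i, 2 * (α t i - z' i) * P (gradF γ σ (α t)) i
          = 2 * ∑ i, P (gradF γ σ (α t)) i * (α t i - z' i) := by
            rw [Finset.mul_sum]
            apply Finset.sum_congr rfl
            intro i _
            ring
        _ = 2 * ∑ i, gradF γ σ (α t) i * (α t i - z' i) := by rw [← h2]
    rw [hv] at hsum
    exact hsum
  -- limit of Φ
  set Φt : ℝ → ℝ := fun t => Φ (max t 0) with hΦtdef
  have hΦtmono : Monotone Φt := by
    intro t1 t2 h
    exact hΦmono (le_max_right t1 0) (le_max_right t2 0) (max_le_max h le_rfl)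
  have hΦtbdd : BddAbove (Set.range Φt) := by
    refine ⟨(m:ℝ), ?_⟩
    rintro _ ⟨t, rfl⟩
    exact Fsp_le hγpos _
  set L : ℝ := ⨆ t, Φt t with hLdef
  have hLt : Filter.Tendsto Φt Filter.atTop (nhds L) := tendsto_atTop_ciSup hΦtmono hΦtbdd
  have hΦL : Filter.Tendsto Φ Filter.atTop (nhds L) := by
    apply hLt.congr'
    filter_upwards [Filter.eventually_ge_atTop (0:ℝ)] with t ht
    rw [hΦtdef]
    simp [max_eq_left ht]
  have hΦleL : ∀ t ∈ Set.Ici (0:ℝ), Φ t ≤ L := by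
    intro t ht
    have h' : Φ (max t 0) ≤ L := le_ciSup hΦtbdd t
    rwa [max_eq_left ht] at h'
  have hLlez : L ≤ Fsp γ σ z := by
    apply ciSup_le
    intro t
    exact hzmax _ (hαtS (max t 0) (le_max_right t 0))
  have hΦzt : ∀ t ∈ Set.Ici (0:ℝ), Φ t ≤ Fsp γ σ z := fun t ht => hzmax _ (hαtS t ht)
  have hLz : L = Fsp γ σ z := by
    by_contra hne
    have hlt : L < Fsp γ σ z := lt_of_le_of_ne hLlez hne
    set δ : ℝ := Fsp γ σ z - L with hδ
    have hδpos : 0 < δ := by rw [hδ]; linarith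
    set R0 : ℝ := ∑ i, (shat i - z i)^2 with hR0
    have hR0nn : 0 ≤ R0 := Finset.sum_nonneg fun i _ => sq_nonneg _
    have hanti_z : AntitoneOn (fun t => ∑ i, (α t i - z i)^2) (Set.Ici 0) := by
      apply anti_on_Ici (f' := fun t => 2 * ∑ i, gradF γ σ (α t) i * (α t i - z i))
        (hfejer z hzS.1)
      intro t ht
      have h := hgradineq (α t) (hαtS t ht) z hzS
      have h2 : Φ t ≤ Fsp γ σ z := hΦzt t ht
      have h3 : ∑ i, gradF γ σ (α t) i * (α t i - z i)
          = -(∑ i, gradF γ σ (α t) i * (z i - α t i)) := by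
        rw [← Finset.sum_neg_distrib]
        apply Finset.sum_congr rfl
        intro i _
        ring
      rw [h3]
      nlinarith [h, h2]
    have hRb : ∀ t ∈ Set.Ici (0:ℝ), ∑ i, (α t i - z i)^2 ≤ R0 := by
      intro t ht
      have h := hanti_z Set.self_mem_Ici ht ht
      simp only [hα0] at h
      exact h
    have hgrad : ∀ t ∈ Set.Ici (0:ℝ), δ ≤ ∑ i, gradF γ σ (α t) i * (z i - α t i) := by
      intro t ht
      have h := hgradineq (α t) (hαtS t ht) z hzS
      have h2 : Φ t ≤ L := hΦleL t ht
      rw [hδ]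
      have h4 : Φ t = Fsp γ σ (α t) := rfl
      linarith [h, h2]
    have hCS : ∀ t ∈ Set.Ici (0:ℝ), δ^2 ≤ Dt t * R0 := by
      intro t ht
      have hq : A.mulVec (fun i => z i - α t i) = 0 := by
        have h1 : (fun i => z i - α t i) = z - α t := rfl
        rw [h1, Matrix.mulVec_sub, hαx t ht, hzS.1, sub_self]
      have h2 := hinner t (fun i => z i - α t i) hq
      have h3 : δ ≤ ∑ i, P (gradF γ σ (α t)) i * (z i - α t i) := by
        rw [← h2]
        exact hgrad t ht
      have h4 : (∑ i, P (gradF γ σ (α t)) i * (z i - α t i))^2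
          ≤ (∑ i, (P (gradF γ σ (α t)) i)^2) * (∑ i, (z i - α t i)^2) :=
        Finset.sum_mul_sq_le_sq_mul_sq Finset.univ _ _
      have h5 : ∑ i, (z i - α t i)^2 = ∑ i, (α t i - z i)^2 := by
        apply Finset.sum_congr rfl
        intro i _
        ring
      have h6 : δ^2 ≤ (∑ i, P (gradF γ σ (α t)) i * (z i - α t i))^2 := by
        nlinarith [h3, hδpos]
      have h7 : (∑ i, (P (gradF γ σ (α t)) i)^2) * (∑ i, (z i - α t i)^2)
          ≤ (∑ i, (P (gradF γ σ (α t)) i)^2) * R0 := by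
        apply mul_le_mul_of_nonneg_left _ (Finset.sum_nonneg fun i _ => sq_nonneg _)
        rw [h5]
        exact hRb t ht
      rw [hDt_eq t]
      linarith [h6, h4, h7]
    have hR0pos : 0 < R0 := by
      rcases hR0nn.lt_or_eq with h | h
      · exact h
      · exfalso
        have h1 := hCS 0 Set.self_mem_Ici
        rw [← h] at h1
        nlinarith [hδpos, h1]
    have hΦ0L : Φ 0 ≤ L := hΦleL 0 Set.self_mem_Ici
    set T : ℝ := (L - Φ 0 + 1) * R0 / δ^2 with hT
    have hTpos : 0 < T := by
      apply div_pos (mul_pos (by linarith) hR0pos) (pow_pos hδpos 2)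
    have hψmono : MonotoneOn (fun t => Φ t - (δ^2/R0) * t) (Set.Ici 0) := by
      apply mono_on_Ici (f' := fun t => Dt t - δ^2/R0)
      · intro t ht
        have h2 : HasDerivAt (fun t : ℝ => (δ^2/R0) * t) (δ^2/R0) t := by
          simpa using (hasDerivAt_id t).const_mul (δ^2/R0)
        exact (hΦd t ht).sub h2
      · intro t ht
        have h1 := hCS t ht
        have h2 : δ^2/R0 ≤ Dt t := by
          rw [div_le_iff₀ hR0pos]
          linarith
        linarith
    have hgrow : Φ 0 - (δ^2/R0) * 0 ≤ Φ T - (δ^2/R0) * T :=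
      hψmono Set.self_mem_Ici (Set.mem_Ici.mpr hTpos.le) hTpos.le
    have hval : (δ^2/R0) * T = L - Φ 0 + 1 := by
      rw [hT]
      field_simp
    have hTle : Φ T ≤ L := hΦleL T (Set.mem_Ici.mpr hTpos.le)
    rw [hval] at hgrow
    simp only [mul_zero, sub_zero] at hgrow
    linarith
  have hΦz : Filter.Tendsto Φ Filter.atTop (nhds (Fsp γ σ z)) := hLz ▸ hΦL
  -- subsequence limit point
  have hyS : ∀ j : ℕ, α j ∈ S := fun j => hαtS j (Set.mem_Ici.mpr (Nat.cast_nonneg j))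
  obtain ⟨p, hpS, φ, hφ, hconv⟩ := hScompact.tendsto_subseq hyS
  have hφt : Filter.Tendsto (fun j => (φ j : ℝ)) Filter.atTop Filter.atTop :=
    tendsto_natCast_atTop_atTop.comp hφ.tendsto_atTop
  have hFp1 : Filter.Tendsto (fun j => Φ ((φ j : ℕ) : ℝ)) Filter.atTop (nhds (Fsp γ σ p)) := by
    have := ((continuous_Fsp hγpos hσ).tendsto p).comp hconv
    exact this
  have hFp2 : Filter.Tendsto (fun j => Φ ((φ j : ℕ) : ℝ)) Filter.atTop (nhds (Fsp γ σ z)) :=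
    hΦz.comp hφt
  have hFpz : Fsp γ σ p = Fsp γ σ z := tendsto_nhds_unique hFp1 hFp2
  -- Fejér convergence to p
  set hp : ℝ → ℝ := fun t => ∑ i, (α t i - p i)^2 with hpdef
  have hpnn : ∀ t, 0 ≤ hp t := fun t => Finset.sum_nonneg fun i _ => sq_nonneg _
  have hanti_p : AntitoneOn hp (Set.Ici 0) := by
    apply anti_on_Ici (f' := fun t => 2 * ∑ i, gradF γ σ (α t) i * (α t i - p i))
      (hfejer p hpS.1)
    intro t ht
    have h := hgradineq (α t) (hαtS t ht) p hpS
    have h2 : Φ t ≤ Fsp γ σ p := by rw [hFpz]; exact hΦzt t ht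
    have h3 : ∑ i, gradF γ σ (α t) i * (α t i - p i)
        = -(∑ i, gradF γ σ (α t) i * (p i - α t i)) := by
      rw [← Finset.sum_neg_distrib]
      apply Finset.sum_congr rfl
      intro i _
      ring
    rw [h3]
    have : Fsp γ σ p - Φ t ≤ ∑ i, gradF γ σ (α t) i * (p i - α t i) := h
    nlinarith [this, h2]
  have hto0 : Filter.Tendsto (fun j => hp ((φ j : ℕ) : ℝ)) Filter.atTop (nhds 0) := by
    have hGcont : Continuous (fun v : Fin m → ℝ => ∑ i, (v i - p i)^2) := by
      apply continuous_finset_sum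
      intro i _
      exact ((continuous_apply i).sub continuous_const).pow 2
    have := (hGcont.tendsto p).comp hconv
    rw [show (∑ i, (p i - p i)^2) = 0 by simp] at this
    exact this
  have hhp0 : Filter.Tendsto hp Filter.atTop (nhds 0) := by
    rw [Metric.tendsto_atTop]
    intro ε hε
    obtain ⟨J, hJ⟩ := (Metric.tendsto_atTop.mp hto0) ε hε
    refine ⟨(φ J : ℝ), fun t ht => ?_⟩
    have hφJnn : (0:ℝ) ≤ (φ J : ℝ) := Nat.cast_nonneg _
    have htnn : (0:ℝ) ≤ t := le_trans hφJnn ht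
    have h1 : hp t ≤ hp (φ J) := hanti_p (Set.mem_Ici.mpr hφJnn) (Set.mem_Ici.mpr htnn) ht
    have h2 := hJ J le_rfl
    rw [Real.dist_eq, sub_zero, abs_of_nonneg (hpnn _)] at h2 ⊢
    linarith
  have hcoord : ∀ i, Filter.Tendsto (fun t => α t i) Filter.atTop (nhds (p i)) := by
    intro i
    have hsq : Filter.Tendsto (fun t => (α t i - p i)^2) Filter.atTop (nhds 0) := by
      apply tendsto_of_tendsto_of_tendsto_of_le_of_le' tendsto_const_nhds hhp0
      · filter_upwards with t
        exact sq_nonneg _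
      · filter_upwards with t
        exact Finset.single_le_sum (f := fun i => (α t i - p i)^2)
          (fun j _ => sq_nonneg _) (Finset.mem_univ i)
    have habs : Filter.Tendsto (fun t => |α t i - p i|) Filter.atTop (nhds 0) := by
      have h := (Real.continuous_sqrt.tendsto 0).comp hsq
      rw [Real.sqrt_zero] at h
      exact h.congr fun t => by
        simp only [Function.comp]
        rw [Real.sqrt_sq_eq_abs]
    rw [tendsto_iff_dist_tendsto_zero]
    exact habs.congr fun t => (Real.dist_eq _ _).symm
  have hαp : Filter.Tendsto α Filter.atTop (nhds p) := tendsto_pi_nhds.mpr hcoord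
  -- conclusion
  refine ⟨p, hαp, hpS.1, ?_, ?_⟩
  · intro s hsx
    by_cases hsF : (m:ℝ) - c ≤ Fsp γ σ s
    · rw [hFpz]
      exact hzmax s ⟨hsx, hsF⟩
    · push_neg at hsF
      have h1 : Fsp γ σ s0 ≤ Fsp γ σ z := hzmax s0 hs0S
      rw [hFpz]
      linarith [hs0S.2]
  · have h1 : Fsp γ σ s0 ≤ Fsp γ σ z := hzmax s0 hs0S
    rw [hFpz]
    linarith
end

section
/- Let {f_σ}_{σ>0} be a family of functions ℝ → ℝ satisfying: (1) for every s ≠ 0, f_σ(s) → 0 as σ → 0; (2) f_σ(0) = 1 for all σ > 0; (3) 0 ≤ f_σ(s) ≤ 1 for all σ > 0 and s ∈ ℝ; (4) for every ν > 0 and every α > 0 there exists σ₀ > 0 such that for all 0 < σ < σ₀ and all s with |s| > α one has f_σ(s) < ν. Define F_σ(s) = Σ_{i=1}^m f_σ(s_i) for s ∈ ℝ^m. Let A be a real n×m matrix with n < m satisfying the URP, let x ∈ ℝⁿ, let s0 ∈ S_x satisfy ‖s0‖₀ = k ≤ n/2, and suppose that for each σ > 0, s_σ ∈ S_x satisfies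 F_σ(s_σ) ≥ m − n + k. Then s_σ → s0 as σ → 0⁺. -/
open Finset
open scoped BigOperators

lemma urp_null_small0 {n m : ℕ} {A : Matrix (Fin n) (Fin m) ℝ} (hURP : URP A)
    (hnm : n ≤ m) (d : Fin m → ℝ) (hd : A.mulVec d = 0)
    (I : Finset (Fin m)) (hI : I.card ≤ n) (hsupp : ∀ i, i ∉ I → d i = 0) : d = 0 := by
  obtain ⟨T, hIT, hTcard⟩ := Finset.exists_superset_card_eq hI (by simpa using hnm)
  let e := T.orderIsoOfFin hTcard
  set g : Fin n → Fin m := fun j => (e j : Fin m) with hg_def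
  have hg : Function.Injective g := fun a b hab => e.injective (Subtype.ext hab)
  have hU := hURP g hg
  set B := A.submatrix id g with hB
  have hBv : B.mulVec (fun j => d (g j)) = 0 := by
    funext i
    have h1 : ∑ j, A i (g j) * d (g j) = ∑ p ∈ T, A i p * d p := by
      rw [← Finset.sum_coe_sort T (fun p => A i p * d p)]
      exact Equiv.sum_comp e.toEquiv (fun p : T => A i (p : Fin m) * d (p : Fin m))
    have h2 : ∑ p ∈ T, A i p * d p = ∑ p, A i p * d p := by
      apply Finset.sum_subset T.subset_univ
      intro p _ hp
      rw [hsupp p (fun hpI => hp (hIT hpI)), mul_zero]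
    have h3 : (A.mulVec d) i = 0 := by rw [hd]; rfl
    calc B.mulVec (fun j => d (g j)) i = ∑ j, A i (g j) * d (g j) := by
          simp [Matrix.mulVec, dotProduct, hB]
      _ = ∑ p, A i p * d p := by rw [h1, h2]
      _ = 0 := by rw [← h3]; simp [Matrix.mulVec, dotProduct]
  have hdet : IsUnit B.det := (Matrix.isUnit_iff_isUnit_det B).mp hU
  have hv : (fun j => d (g j)) = 0 := by
    have := congrArg (fun w => B⁻¹.mulVec w) hBv
    simpa [Matrix.mulVec_mulVec, Matrix.nonsing_inv_mul B hdet] using this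
  funext p
  by_cases hp : p ∈ T
  · have : p = g (e.symm ⟨p, hp⟩) := by simp [hg_def]
    rw [this]
    exact congrFun hv _
  · exact hsupp p (fun hpI => hp (hIT hpI))

lemma urp_exists_C0 {n m : ℕ} {A : Matrix (Fin n) (Fin m) ℝ} (hURP : URP A) (hnm : n ≤ m) :
    ∃ C : ℝ, 0 < C ∧ ∀ I : Finset (Fin m), I.card ≤ n → ∀ d : Fin m → ℝ, A.mulVec d = 0 →
      ‖d‖ ≤ C * ‖(fun i => if i ∈ I then 0 else d i : Fin m → ℝ)‖ := by
  have main : ∀ I : Finset (Fin m), ∃ K : NNReal, I.card ≤ n →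
      ∀ d : Fin m → ℝ, A.mulVec d = 0 →
        ‖d‖ ≤ K * ‖(fun i => if i ∈ I then 0 else d i : Fin m → ℝ)‖ := by
    intro I
    by_cases hI : I.card ≤ n
    · set N := LinearMap.ker (Matrix.mulVecLin A) with hN
      let L : (Fin m → ℝ) →ₗ[ℝ] (Fin m → ℝ) :=
        { toFun := fun d i => if i ∈ I then 0 else d i
          map_add' := by intro a b; funext i; by_cases h : i ∈ I <;> simp [h]
          map_smul' := by intro c a; funext i; by_cases h : i ∈ I <;> simp [h] }
      let T := L.comp N.subtype
      have hker : LinearMap.ker T = ⊥ := by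
        rw [LinearMap.ker_eq_bot']
        rintro ⟨d, hd⟩ hTd
        have hd' : A.mulVec d = 0 := by
          simpa [hN, LinearMap.mem_ker] using hd
        have hz : ∀ i, i ∉ I → d i = 0 := by
          intro i hi
          simpa [T, L, hi] using congrFun hTd i
        have : d = 0 := urp_null_small0 hURP hnm d hd' I hI hz
        exact Subtype.ext this
      obtain ⟨K, hK0, hK⟩ := T.exists_antilipschitzWith hker
      refine ⟨K, fun _ d hd => ?_⟩
      have hdN : d ∈ N := by simpa [hN, LinearMap.mem_ker] using hd
      have h := hK.le_mul_dist (⟨d, hdN⟩ : N) 0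
      rw [map_zero, dist_zero_right, dist_zero_right] at h
      exact h
    · exact ⟨0, fun h => absurd h hI⟩
  choose K hK using main
  refine ⟨1 + ∑ J : Finset (Fin m), (K J : ℝ), by positivity, ?_⟩
  intro I hI d hd
  have h1 := hK I hI d hd
  have h2 : (K I : ℝ) ≤ 1 + ∑ J : Finset (Fin m), (K J : ℝ) := by
    have : (K I : ℝ) ≤ ∑ J : Finset (Fin m), (K J : ℝ) :=
      Finset.single_le_sum (fun J _ => (K J).coe_nonneg) (mem_univ I)
    linarith
  calc ‖d‖ ≤ K I * ‖(fun i => if i ∈ I then 0 else d i : Fin m → ℝ)‖ := h1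
    _ ≤ (1 + ∑ J : Finset (Fin m), (K J : ℝ)) * _ :=
      mul_le_mul_of_nonneg_right h2 (norm_nonneg _)


/-- if the family f_σ approximates a Kronecker delta (conditions 1–4) and
s_σ ∈ S_x satisfies F_σ(s_σ) ≥ m − n + k, then s_σ → s0 as σ → 0⁺. -/
theorem stmt_9 {n m : ℕ} (hnm : n < m) (A : Matrix (Fin n) (Fin m) ℝ) (hURP : URP A)
    (f : ℝ → ℝ → ℝ)
    (h1 : ∀ s : ℝ, s ≠ 0 →
      Filter.Tendsto (fun σ => f σ s) (nhdsWithin 0 (Set.Ioi 0)) (nhds 0))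
    (h2 : ∀ σ : ℝ, 0 < σ → f σ 0 = 1)
    (h3 : ∀ σ : ℝ, 0 < σ → ∀ s : ℝ, 0 ≤ f σ s ∧ f σ s ≤ 1)
    (h4 : ∀ ν : ℝ, 0 < ν → ∀ a : ℝ, 0 < a → ∃ σ0 : ℝ, 0 < σ0 ∧
      ∀ σ : ℝ, 0 < σ → σ < σ0 → ∀ s : ℝ, a < |s| → f σ s < ν)
    (x : Fin n → ℝ) (s0 : Fin m → ℝ) (hs0x : A.mulVec s0 = x)
    (k : ℕ) (hk : k = l0 s0) (hk2 : (k : ℝ) ≤ n / 2)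
    (sσ : ℝ → Fin m → ℝ) (hsσx : ∀ σ : ℝ, 0 < σ → A.mulVec (sσ σ) = x)
    (hF : ∀ σ : ℝ, 0 < σ → (m : ℝ) - n + k ≤ ∑ i, f σ (sσ σ i)) :
    Filter.Tendsto sσ (nhdsWithin 0 (Set.Ioi 0)) (nhds s0) := by
  obtain ⟨C, hC0, hC⟩ := urp_exists_C0 hURP hnm.le
  have hkn : k ≤ n := by
    have h : (k : ℝ) ≤ (n : ℝ) := by
      have h0 : (0 : ℝ) ≤ (n : ℝ) := Nat.cast_nonneg n
      linarith
    exact_mod_cast h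
  rw [Metric.tendsto_nhds]
  intro ε hε
  set ν : ℝ := 1 / (2 * (n + 1)) with hν_def
  have hν0 : 0 < ν := by positivity
  set α : ℝ := ε / (2 * C) with hα_def
  have hα0 : 0 < α := by positivity
  obtain ⟨σ0, hσ00, hσ0⟩ := h4 ν hν0 α hα0
  have hmem : Set.Ioo (0 : ℝ) σ0 ∈ nhdsWithin 0 (Set.Ioi 0) :=
    Ioo_mem_nhdsGT_of_mem (Set.mem_Ico.mpr ⟨le_refl 0, hσ00⟩)
  filter_upwards [hmem] with σ hσ
  obtain ⟨hσpos, hσlt⟩ := hσ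
  set bad : Finset (Fin m) := univ.filter (fun i => f σ (sσ σ i) < ν) with hbad_def
  -- counting bound
  have hsplit : ∑ i, f σ (sσ σ i) ≤ (badᶜ.card : ℝ) + bad.card * ν := by
    rw [← Finset.sum_add_sum_compl bad]
    have hb : ∑ i ∈ bad, f σ (sσ σ i) ≤ bad.card * ν := by
      have := Finset.sum_le_card_nsmul bad (fun i => f σ (sσ σ i)) ν
        (fun i hi => le_of_lt ((Finset.mem_filter.mp hi).2))
      simpa [nsmul_eq_mul] using this
    have hbc : ∑ i ∈ badᶜ, f σ (sσ σ i) ≤ (badᶜ.card : ℝ) := by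
      have := Finset.sum_le_card_nsmul badᶜ (fun i => f σ (sσ σ i)) 1
        (fun i _ => (h3 σ hσpos (sσ σ i)).2)
      simpa [nsmul_eq_mul] using this
    linarith
  have hcards : (badᶜ.card : ℝ) = (m : ℝ) - bad.card := by
    have hle : bad.card ≤ m := by
      simpa using Finset.card_le_univ bad
    rw [Finset.card_compl, Fintype.card_fin, Nat.cast_sub hle]
  have hbadcard : bad.card ≤ n - k := by
    have hsum := hF σ hσpos
    have h1' : (bad.card : ℝ) * (1 - ν) ≤ (n : ℝ) - k := by
      rw [hcards] at hsplit
      nlinarith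
    have hνn : ν * (2 * ((n : ℝ) + 1)) = 1 := by
      rw [hν_def]; field_simp
    have h2' : (bad.card : ℝ) < ((n - k : ℕ) : ℝ) + 1 := by
      have hcast : ((n - k : ℕ) : ℝ) = (n : ℝ) - k := by
        push_cast [Nat.cast_sub hkn]; ring
      rw [hcast]
      have hk0 : (0 : ℝ) ≤ k := Nat.cast_nonneg k
      have hkn' : (k : ℝ) ≤ n := by exact_mod_cast hkn
      nlinarith
    exact_mod_cast Nat.lt_succ_iff.mp (by exact_mod_cast h2')
  set supp : Finset (Fin m) := univ.filter (fun i => s0 i ≠ 0) with hsupp_def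
  have hsuppcard : supp.card = k := hk.symm
  set I : Finset (Fin m) := bad ∪ supp with hI_def
  have hIcard : I.card ≤ n := by
    calc I.card ≤ bad.card + supp.card := Finset.card_union_le _ _
      _ ≤ (n - k) + k := by rw [hsuppcard]; omega
      _ = n := by omega
  set d : Fin m → ℝ := sσ σ - s0 with hd_def
  have hdnull : A.mulVec d = 0 := by
    rw [hd_def, Matrix.mulVec_sub, hsσx σ hσpos, hs0x, sub_self]
  have hsmall : ∀ i, i ∉ I → |d i| ≤ α := by
    intro i hi
    have hib : i ∉ bad := fun h => hi (Finset.mem_union_left _ h)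
    have his : s0 i = 0 := by
      by_contra h
      exact hi (Finset.mem_union_right _ (Finset.mem_filter.mpr ⟨mem_univ _, h⟩))
    have hno : ¬ (α < |sσ σ i|) := by
      intro hgt
      exact hib (Finset.mem_filter.mpr ⟨mem_univ _, hσ0 σ hσpos hσlt _ hgt⟩)
    have : d i = sσ σ i := by simp [hd_def, his]
    rw [this]
    exact le_of_not_gt hno
  have hnorm : ‖(fun i => if i ∈ I then 0 else d i : Fin m → ℝ)‖ ≤ α := by
    rw [pi_norm_le_iff_of_nonneg hα0.le]
    intro i
    by_cases h : i ∈ I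
    · simp [h, hα0.le]
    · simpa [h, Real.norm_eq_abs] using hsmall i h
  have hfin : ‖d‖ ≤ C * α :=
    le_trans (hC I hIcard d hdnull) (mul_le_mul_of_nonneg_left hnorm hC0.le)
  have hd2 : dist (sσ σ) s0 = ‖d‖ := by rw [hd_def, dist_eq_norm]
  rw [hd2]
  have hCα : C * α = ε / 2 := by
    rw [hα_def]; field_simp
  rw [hCα] at hfin
  linarith
end
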